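/- arXiv:1909.01094 — 6 statements merged into one kernel-verified Lean document; each statement's English description precedes it below -/
import Mathlib

section
/- Let K be a field, G = ⟨x⟩ an infinite cyclic group, and B = K[x, x⁻¹] the Laurent polynomial ring (the group algebra KG). If A is a K-subspace of B such that A/(A ∩ Ax) and A/(A ∩ Ax⁻¹) are finite-dimensional (i.e., A is G-almost invariant), then A is almost equal to one of the four subspaces 0, K[x], K[x⁻¹], B, where two subspaces U, W are almost equal if both U/(U ∩ W) and W/(U ∩ W) are finite-dimensional. -/
open LaurentPolynomial

/-- Two subspaces `U`, `W` are almost equal if `U/(U∩W)` and `W/(U∩W)` are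
finite-dimensional. -/
def AlmostEqual {K V : Type*} [Field K] [AddCommGroup V] [Module K V]
    (U W : Submodule K V) : Prop :=
  FiniteDimensional K (U ⧸ (U ⊓ W).comap U.subtype) ∧
    FiniteDimensional K (W ⧸ (U ⊓ W).comap W.subtype)

noncomputable section
namespace AIL

variable {K : Type*} [Field K]

instance instCoeFunLaurent : CoeFun K[T;T⁻¹] (fun _ => ℤ → K) := ⟨fun p => p.coeff⟩

def tau (K : Type*) [Field K] (n : ℤ) : K[T;T⁻¹] ≃ₗ[K] K[T;T⁻¹] :=
  (AddMonoidAlgebra.coeffLinearEquiv K).trans ((Finsupp.domLCongr (Equiv.addRight n)).trans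
    (AddMonoidAlgebra.coeffLinearEquiv K).symm)

lemma tau_apply (p : K[T;T⁻¹]) (n m : ℤ) : (tau K n p) m = p (m - n) := rfl

lemma mulRight_eq_tau (n : ℤ) :
    (LinearMap.mulRight K (T n) : K[T;T⁻¹] →ₗ[K] K[T;T⁻¹]) = (tau K n).toLinearMap := by
  apply LinearMap.ext; intro p
  ext m
  show (p * T n).coeff m = p.coeff (m - n)
  rw [show (T n : K[T;T⁻¹]) = AddMonoidAlgebra.single n 1 from rfl,
    AddMonoidAlgebra.coeff_mul_single_apply, mul_one, sub_eq_add_neg]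

lemma tau_comp (n k : ℤ) (p : K[T;T⁻¹]) : tau K n (tau K k p) = tau K (k + n) p := by
  ext m; rw [tau_apply, tau_apply, tau_apply]; congr 1; ring

lemma tau_zero (p : K[T;T⁻¹]) : tau K 0 p = p := by
  ext m; rw [tau_apply]; congr 1; ring


/-- coefficient of a Laurent polynomial, as a linear map -/
def cf (K : Type*) [Field K] (m : ℤ) : K[T;T⁻¹] →ₗ[K] K where
  toFun p := p m
  map_add' p q := Finsupp.add_apply p.coeff q.coeff m
  map_smul' c p := Finsupp.smul_apply c p.coeff m

/-- the subspace of elements supported in `S` -/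
def suppSub (K : Type*) [Field K] (S : Set ℤ) : Submodule K K[T;T⁻¹] where
  carrier := {p | ∀ m, m ∉ S → p m = 0}
  add_mem' {p q} hp hq m hm := by
    show (p + q) m = 0
    rw [AddMonoidAlgebra.coeff_add, Finsupp.add_apply, hp m hm, hq m hm, add_zero]
  zero_mem' := fun m _ => rfl
  smul_mem' c p hp m hm := by
    show (c • p) m = 0
    rw [AddMonoidAlgebra.coeff_smul, Finsupp.smul_apply, hp m hm, smul_zero]

lemma mem_suppSub {S : Set ℤ} {p : K[T;T⁻¹]} : p ∈ suppSub K S ↔ ∀ m, m ∉ S → p m = 0 :=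
  Iff.rfl

lemma suppSub_mono {S S' : Set ℤ} (h : S ⊆ S') : suppSub K S ≤ suppSub K S' :=
  fun p hp m hm => hp m (fun hc => hm (h hc))


lemma T_mem_suppSub {S : Set ℤ} {n : ℤ} (h : n ∈ S) : (T n : K[T;T⁻¹]) ∈ suppSub K S := by
  intro m hm
  rw [T_apply, if_neg]; intro hc; exact hm (hc ▸ h)


def TopAt (p : K[T;T⁻¹]) (n : ℤ) : Prop := p n ≠ 0 ∧ ∀ m, n < m → p m = 0
def BotAt (p : K[T;T⁻¹]) (n : ℤ) : Prop := p n ≠ 0 ∧ ∀ m, m < n → p m = 0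

lemma exists_topAt {p : K[T;T⁻¹]} (hp : p ≠ 0) : ∃ n, TopAt p n := by
  have hs : (Finsupp.support p.coeff).Nonempty := Finsupp.support_nonempty_iff.mpr (AddMonoidAlgebra.coeff_eq_zero.not.mpr hp)
  refine ⟨(Finsupp.support p.coeff).max' hs, ?_, ?_⟩
  · exact Finsupp.mem_support_iff.mp ((Finsupp.support p.coeff).max'_mem hs)
  · intro m hm
    by_contra hc
    exact absurd (Finset.le_max' _ m (Finsupp.mem_support_iff.mpr hc)) (not_le.mpr hm)

lemma exists_botAt {p : K[T;T⁻¹]} (hp : p ≠ 0) : ∃ n, BotAt p n := by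
  have hs : (Finsupp.support p.coeff).Nonempty := Finsupp.support_nonempty_iff.mpr (AddMonoidAlgebra.coeff_eq_zero.not.mpr hp)
  refine ⟨(Finsupp.support p.coeff).min' hs, ?_, ?_⟩
  · exact Finsupp.mem_support_iff.mp ((Finsupp.support p.coeff).min'_mem hs)
  · intro m hm
    by_contra hc
    exact absurd (Finset.min'_le _ m (Finsupp.mem_support_iff.mpr hc)) (not_le.mpr hm)

lemma exists_suppBound (p : K[T;T⁻¹]) : ∃ n : ℕ, ∀ m : ℤ, (n:ℤ) ≤ |m| → p m = 0 := by
  refine ⟨(Finsupp.support p.coeff).sup (fun x => x.natAbs) + 1, fun m hm => ?_⟩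
  by_contra hc
  have h1 : m ∈ Finsupp.support p.coeff := Finsupp.mem_support_iff.mpr hc
  have h2 : m.natAbs ≤ (Finsupp.support p.coeff).sup (fun x => x.natAbs) := Finset.le_sup h1
  have h3 : (m.natAbs : ℤ) = |m| := Int.natCast_natAbs m
  omega

def Dtop (U : Submodule K K[T;T⁻¹]) : Set ℤ := {n | ∃ p ∈ U, TopAt p n}
def Dbot (U : Submodule K K[T;T⁻¹]) : Set ℤ := {n | ∃ p ∈ U, BotAt p n}

lemma dtop_mono {U V : Submodule K K[T;T⁻¹]} (h : U ≤ V) : Dtop U ⊆ Dtop V :=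
  fun _ ⟨p, hp, ht⟩ => ⟨p, h hp, ht⟩


lemma fg_mono {U V : Submodule K K[T;T⁻¹]} (h : U ≤ V) (hV : V.FG) : U.FG := by
  haveI := (Submodule.fg_iff_finiteDimensional V).mp hV
  exact (Submodule.fg_iff_finiteDimensional U).mpr (Submodule.finiteDimensional_of_le h)

/-- workhorse: if coordinates on a finite set `S` cut `U` down to an FG piece, `U` is FG -/
lemma fg_of_coords (U V : Submodule K K[T;T⁻¹]) (S : Finset ℤ) (hV : V.FG)
    (h : ∀ x ∈ U, (∀ s ∈ S, x s = (0:K)) → x ∈ V) : U.FG := by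
  classical
  set f : K[T;T⁻¹] →ₗ[K] (S → K) := LinearMap.pi (fun s => cf K s) with hf
  apply Submodule.fg_of_fg_map_of_fg_inf_ker f
  · apply (Submodule.fg_iff_finiteDimensional _).mpr
    haveI : FiniteDimensional K (S → K) := inferInstance
    exact FiniteDimensional.finiteDimensional_submodule _
  · apply fg_mono _ hV
    rintro x ⟨hxU, hxk⟩
    apply h x hxU
    intro s hs
    have := congrFun (LinearMap.mem_ker.mp hxk) ⟨s, hs⟩
    exact this


def aLE (U W : Submodule K K[T;T⁻¹]) : Prop :=
  ∃ X : Submodule K K[T;T⁻¹], X.FG ∧ U ≤ W ⊔ X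

lemma aLE_of_le {U W : Submodule K K[T;T⁻¹]} (h : U ≤ W) : aLE U W :=
  ⟨⊥, Submodule.fg_bot, by simpa using h⟩

lemma aLE.mono_left {U U' W : Submodule K K[T;T⁻¹]} (h : aLE U W) (h' : U' ≤ U) : aLE U' W :=
  ⟨h.choose, h.choose_spec.1, le_trans h' h.choose_spec.2⟩

lemma aLE.mono_right {U W W' : Submodule K K[T;T⁻¹]} (h : aLE U W) (h' : W ≤ W') : aLE U W' :=
  ⟨h.choose, h.choose_spec.1, le_trans h.choose_spec.2 (sup_le_sup_right h' _)⟩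

lemma aLE.trans {U V W : Submodule K K[T;T⁻¹]} (h1 : aLE U V) (h2 : aLE V W) : aLE U W := by
  obtain ⟨X, hX, hUX⟩ := h1
  obtain ⟨Y, hY, hVY⟩ := h2
  refine ⟨Y ⊔ X, hY.sup hX, le_trans hUX ?_⟩
  rw [← sup_assoc]
  exact sup_le_sup_right hVY X

lemma aLE_of_fg {U W : Submodule K K[T;T⁻¹]} (h : U.FG) : aLE U W :=
  ⟨U, h, le_sup_right⟩

/-- conversion: finite-dimensionality of the formal quotient gives `aLE` -/
lemma aLE_of_fd {U W : Submodule K K[T;T⁻¹]}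
    (h : FiniteDimensional K (U ⧸ (U ⊓ W).comap U.subtype)) : aLE U W := by
  classical
  set q := (U ⊓ W).comap U.subtype with hq
  haveI := h
  obtain ⟨s, hs⟩ := Module.finite_def.mp ‹Module.Finite K (U ⧸ q)›
  have hsurj := Submodule.Quotient.mk_surjective q
  set lift : (U ⧸ q) → U := fun x => (hsurj x).choose with hlift
  have hliftspec : ∀ x, Submodule.Quotient.mk (lift x) = x := fun x => (hsurj x).choose_spec
  refine ⟨Submodule.span K ((fun x => ((lift x : U) : K[T;T⁻¹])) '' s), Submodule.fg_span
    ((s.finite_toSet).image _), ?_⟩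
  intro a ha
  set Z : Submodule K U := (W ⊔ Submodule.span K ((fun x => ((lift x : U) : K[T;T⁻¹])) '' s)).comap
    U.subtype with hZ
  have hqZ : q ≤ Z := by
    intro x hx
    exact Submodule.mem_sup_left (Submodule.mem_comap.mp hx).2
  suffices htop : Z = ⊤ by
    have := htop ▸ Submodule.mem_top (x := (⟨a, ha⟩ : U))
    exact (Submodule.mem_comap.mp this)
  -- show the quotient image of Z is everything
  have hmap : Z.map q.mkQ = ⊤ := by
    rw [eq_top_iff, ← hs, Submodule.span_le]
    intro x hx
    refine ⟨lift x, ?_, hliftspec x⟩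
    apply Submodule.mem_comap.mpr
    apply Submodule.mem_sup_right
    exact Submodule.subset_span ⟨x, hx, rfl⟩
  have := congrArg (Submodule.comap q.mkQ) hmap
  rw [Submodule.comap_map_mkQ, Submodule.comap_top, sup_eq_right.mpr hqZ] at this
  exact this

/-- conversion: `aLE` gives finite-dimensionality of the formal quotient -/
lemma fd_of_aLE {U W : Submodule K K[T;T⁻¹]} (h : aLE U W) :
    FiniteDimensional K (U ⧸ (U ⊓ W).comap U.subtype) := by
  obtain ⟨X, hX, hUX⟩ := h
  set φ : U →ₗ[K] K[T;T⁻¹] ⧸ W := W.mkQ.comp U.subtype with hφ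
  have hker : LinearMap.ker φ = (U ⊓ W).comap U.subtype := by
    ext x
    simp only [hφ, LinearMap.mem_ker, LinearMap.comp_apply, Submodule.mkQ_apply,
      Submodule.Quotient.mk_eq_zero, Submodule.mem_comap]
    exact ⟨fun hw => ⟨x.2, hw⟩, fun hw => hw.2⟩
  have hrange : FiniteDimensional K (LinearMap.range φ) := by
    have h1 : LinearMap.range φ ≤ X.map W.mkQ := by
      rintro y ⟨x, rfl⟩
      have := hUX x.2
      rw [Submodule.mem_sup] at this
      obtain ⟨w, hw, z, hz, hwz⟩ := this
      refine ⟨z, hz, ?_⟩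
      show W.mkQ z = W.mkQ x
      rw [← sub_eq_zero, ← map_sub, Submodule.mkQ_apply, Submodule.Quotient.mk_eq_zero]
      have : z - (x : K[T;T⁻¹]) = -w := by rw [← hwz]; ring
      rw [this]
      exact W.neg_mem hw
    haveI : FiniteDimensional K (X.map W.mkQ) :=
      (Submodule.fg_iff_finiteDimensional _).mp (hX.map _)
    exact Submodule.finiteDimensional_of_le h1
  haveI := hrange
  haveI : FiniteDimensional K (U ⧸ LinearMap.ker φ) :=
    LinearEquiv.finiteDimensional (LinearMap.quotKerEquivRange φ).symm
  rw [hker] at this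
  exact this


lemma dtop_diff_finite {U W X : Submodule K K[T;T⁻¹]} (hX : X.FG) (hUX : U ≤ W ⊔ X) :
    (Dtop U \ Dtop (U ⊓ W)).Finite := by
  classical
  by_contra hinf
  replace hinf : (Dtop U \ Dtop (U ⊓ W)).Infinite := hinf
  haveI hXfd : FiniteDimensional K X := (Submodule.fg_iff_finiteDimensional X).mp hX
  set d := Module.finrank K X with hd
  obtain ⟨t, hts, htc⟩ := hinf.exists_subset_card_eq (d + 1)
  have hch : ∀ n ∈ t, ∃ p w x, p ∈ U ∧ TopAt p n ∧ w ∈ W ∧ x ∈ X ∧ p = w + x := by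
    intro n hn
    obtain ⟨p, hpU, hptop⟩ := (hts hn).1
    obtain ⟨w, hw, x, hx, hwx⟩ := Submodule.mem_sup.mp (hUX hpU)
    exact ⟨p, w, x, hpU, hptop, hw, hx, hwx.symm⟩
  choose p w x hpU hptop hwW hxX hpwx using hch
  set ι := {i // i ∈ t}
  set xfam : ι → X := fun i => ⟨x i i.2, hxX i i.2⟩ with hxfam
  have hnli : ¬ LinearIndependent K xfam := by
    intro hli
    have := hli.fintype_card_le_finrank
    rw [Fintype.card_coe, htc] at this
    omega
  obtain ⟨g, hgsum, i₀, hgi₀⟩ := Fintype.not_linearIndependent_iff.mp hnli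
  -- the set of indices with nonzero coefficient, and its maximum
  set s' : Finset ι := Finset.univ.filter (fun i => g i ≠ 0) with hs'
  have hs'ne : (s'.image (fun i : ι => (i : ℤ))).Nonempty :=
    ⟨i₀, Finset.mem_image.mpr ⟨i₀, Finset.mem_filter.mpr ⟨Finset.mem_univ _, hgi₀⟩, rfl⟩⟩
  set nstar := (s'.image (fun i : ι => (i : ℤ))).max' hs'ne with hnstar
  obtain ⟨istar, histar, histar2⟩ := Finset.mem_image.mp ((s'.image _).max'_mem hs'ne)
  replace histar2 : (istar : ℤ) = nstar := by rw [hnstar]; exact histar2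
  have hgstar : g istar ≠ 0 := (Finset.mem_filter.mp histar).2
  have hle : ∀ i : ι, g i ≠ 0 → (i : ℤ) ≤ nstar := by
    intro i hi
    exact Finset.le_max' _ _ (Finset.mem_image.mpr
      ⟨i, Finset.mem_filter.mpr ⟨Finset.mem_univ _, hi⟩, rfl⟩)
  -- the combination
  set c : K[T;T⁻¹] := ∑ i : ι, g i • p i i.2 with hc
  have hcU : c ∈ U := Submodule.sum_mem _ (fun i _ => Submodule.smul_mem _ _ (hpU i i.2))
  have hxzero : (∑ i : ι, g i • x i i.2) = (0 : K[T;T⁻¹]) := by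
    have := congrArg (X.subtype) hgsum
    rw [map_sum, map_zero] at this
    simpa using this
  have hcW : c ∈ W := by
    have : c = ∑ i : ι, g i • w i i.2 := by
      rw [hc, ← add_zero (∑ i : ι, g i • w i i.2), ← hxzero, ← Finset.sum_add_distrib]
      congr 1
      ext i
      rw [← smul_add, hpwx i i.2]
    rw [this]
    exact Submodule.sum_mem _ (fun i _ => Submodule.smul_mem _ _ (hwW i i.2))
  -- coefficient computations
  have happly : ∀ m : ℤ, c m = ∑ i : ι, g i * (p i i.2) m := by
    intro m
    rw [hc]
    rw [AddMonoidAlgebra.coeff_sum, Finsupp.finset_sum_apply]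
    exact Finset.sum_congr rfl (fun i _ => AddMonoidAlgebra.coeff_smul_apply _ _ _)
  have htopc : TopAt c nstar := by
    constructor
    · rw [happly]
      have : ∀ i : ι, i ≠ istar → g i * (p i i.2) nstar = 0 := by
        intro i hi
        by_cases hgi : g i = 0
        · rw [hgi, zero_mul]
        · have h1 : (i : ℤ) ≤ nstar := hle i hgi
          have h2 : (i : ℤ) ≠ nstar := by
            intro hc'
            exact hi (Subtype.ext (by rw [hc', ← histar2]))
          rw [(hptop i i.2).2 nstar (by omega), mul_zero]
      rw [Finset.sum_eq_single istar (fun i _ hi => this i hi) (by simp)]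
      have : (p istar istar.2) nstar ≠ 0 := by
        rw [← histar2]
        exact (hptop istar istar.2).1
      exact mul_ne_zero hgstar this
    · intro m hm
      rw [happly]
      apply Finset.sum_eq_zero
      intro i _
      by_cases hgi : g i = 0
      · rw [hgi, zero_mul]
      · rw [(hptop i i.2).2 m (lt_of_le_of_lt (hle i hgi) hm), mul_zero]
  have : nstar ∈ Dtop (U ⊓ W) := ⟨c, ⟨hcU, hcW⟩, htopc⟩
  have hns : nstar ∈ t := by rw [← histar2]; exact istar.2
  exact (hts hns).2 this


section chunk7
variable {K : Type*} [Field K]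

def Ppos (K : Type*) [Field K] : Submodule K K[T;T⁻¹] := suppSub K {m | 0 ≤ m}
def Nneg (K : Type*) [Field K] : Submodule K K[T;T⁻¹] := suppSub K {m | m < 0}
def Pnp (K : Type*) [Field K] : Submodule K K[T;T⁻¹] := suppSub K {m | m ≤ 0}

lemma fg_of_dtop_finite {U : Submodule K K[T;T⁻¹]} (h : (Dtop U).Finite) : U.FG := by
  classical
  apply fg_of_coords U ⊥ h.toFinset Submodule.fg_bot
  intro x hxU hxc
  rw [Submodule.mem_bot]
  by_contra hx
  obtain ⟨n, hn⟩ := exists_topAt hx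
  exact hn.1 (hxc n (h.mem_toFinset.mpr ⟨x, hxU, hn⟩))

lemma ray_elim (V : Submodule K K[T;T⁻¹]) (hVP : V ≤ Ppos K) (N₀ : ℤ)
    (hw : ∀ n : ℤ, N₀ ≤ n → n ∈ Dtop V) :
    Ppos K ≤ V ⊔ Submodule.span K ((fun k => (T k : K[T;T⁻¹])) '' (Set.Icc 0 N₀)) := by
  classical
  set X := Submodule.span K ((fun k => (T k : K[T;T⁻¹])) '' (Set.Icc 0 N₀)) with hX
  have key : ∀ n : ℕ, ∀ p ∈ Ppos K, (∀ m : ℤ, (n:ℤ) ≤ m → p m = 0) → p ∈ V ⊔ X := by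
    intro n
    induction n with
    | zero =>
      intro p hp hvan
      have : p = 0 := by
        ext m
        by_cases hm : (0:ℤ) ≤ m
        · exact hvan m (by exact_mod_cast hm)
        · exact hp m (by simpa using hm)
      rw [this]; exact Submodule.zero_mem _
    | succ n ih =>
      intro p hp hvan
      set c := p (n:ℤ) with hc
      by_cases hd : (n:ℤ) ∈ Dtop V
      · obtain ⟨v, hvV, hvtop⟩ := hd
        set q := p - (c * (v (n:ℤ))⁻¹) • v with hq
        have hq1 : q ∈ Ppos K := Submodule.sub_mem _ hp (Submodule.smul_mem _ _ (hVP hvV))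
        have hq2 : ∀ m : ℤ, (n:ℤ) ≤ m → q m = 0 := by
          intro m hm
          rw [hq]
          rw [AddMonoidAlgebra.coeff_sub, AddMonoidAlgebra.coeff_smul, Finsupp.sub_apply, Finsupp.smul_apply]
          rcases eq_or_lt_of_le hm with hEq | hLt
          · rw [← hEq, ← hc, smul_eq_mul, mul_assoc, inv_mul_cancel₀ hvtop.1, mul_one, sub_self]
          · rw [hvan m (by omega), hvtop.2 m hLt, smul_zero, sub_zero]
        have := ih q hq1 hq2
        have hpq : p = q + (c * (v (n:ℤ))⁻¹) • v := by rw [hq]; ring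
        rw [hpq]
        exact Submodule.add_mem _ this (Submodule.mem_sup_left (Submodule.smul_mem _ _ hvV))
      · have hn0 : (n:ℤ) ≤ N₀ := by
          by_contra hcon
          exact hd (hw _ (by omega))
        have hTX : (T (n:ℤ) : K[T;T⁻¹]) ∈ X :=
          Submodule.subset_span ⟨(n:ℤ), ⟨Int.ofNat_nonneg n, hn0⟩, rfl⟩
        set q := p - c • (T (n:ℤ) : K[T;T⁻¹]) with hq
        have hq1 : q ∈ Ppos K := Submodule.sub_mem _ hp
          (Submodule.smul_mem _ _ (T_mem_suppSub (by simp)))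
        have hq2 : ∀ m : ℤ, (n:ℤ) ≤ m → q m = 0 := by
          intro m hm
          rw [hq, AddMonoidAlgebra.coeff_sub, AddMonoidAlgebra.coeff_smul, Finsupp.sub_apply, Finsupp.smul_apply]
          rcases eq_or_lt_of_le hm with hEq | hLt
          · rw [← hEq, ← hc, T_apply, if_pos rfl, smul_eq_mul, mul_one, sub_self]
          · rw [hvan m (by omega), T_apply, if_neg (by omega), smul_zero, sub_zero]
        have := ih q hq1 hq2
        have hpq : p = q + c • (T (n:ℤ) : K[T;T⁻¹]) := by rw [hq]; ring
        rw [hpq]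
        exact Submodule.add_mem _ this (Submodule.mem_sup_right (Submodule.smul_mem _ _ hTX))
  intro p hp
  obtain ⟨n, hn⟩ := exists_suppBound p
  exact key n p hp (fun m hm => hn m (by rw [abs_of_nonneg (by omega)]; exact hm))

lemma ray_top (U W : Submodule K K[T;T⁻¹]) (hUP : U ≤ Ppos K) (h1 : aLE U W)
    (hshift : ∀ p ∈ U ⊓ W, tau K 1 p ∈ U) (hnfg : ¬ U.FG) : aLE (Ppos K) U := by
  classical
  obtain ⟨X, hXfg, hUX⟩ := h1
  have hfin : (Dtop U \ Dtop (U ⊓ W)).Finite := dtop_diff_finite hXfg hUX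
  have hStep : ∀ n ∈ Dtop (U ⊓ W), (n+1) ∈ Dtop U := by
    rintro n ⟨p, hpUW, hptop⟩
    refine ⟨tau K 1 p, hshift p hpUW, ?_, ?_⟩
    · rw [tau_apply]; simpa using hptop.1
    · intro m hm; rw [tau_apply]; exact hptop.2 _ (by omega)
  have hSnn : ∀ n ∈ Dtop U, (0:ℤ) ≤ n := by
    rintro n ⟨p, hpU, hptop⟩
    by_contra hneg
    exact hptop.1 (hUP hpU n (by simpa using hneg))
  have hSinf : (Dtop U).Infinite := by
    intro hSfin
    exact hnfg (fg_of_dtop_finite hSfin)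
  obtain ⟨N₁, hN₁⟩ := hfin.bddAbove
  have hex : ∃ n₀ ∈ Dtop U, N₁ < n₀ := by
    by_contra hcon
    push_neg at hcon
    apply hSinf
    apply Set.Finite.subset (Set.finite_Icc 0 N₁)
    intro n hn
    exact ⟨hSnn n hn, hcon n hn⟩
  obtain ⟨n₀, hn₀S, hn₀N⟩ := hex
  have hnat : ∀ k : ℕ, (n₀ + k) ∈ Dtop U := by
    intro k
    induction k with
    | zero => simpa using hn₀S
    | succ k ih =>
      have hmem : (n₀ + k) ∈ Dtop (U ⊓ W) := by
        by_contra hcon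
        have : (n₀ + (k:ℤ)) ∈ Dtop U \ Dtop (U ⊓ W) := ⟨ih, hcon⟩
        have := hN₁ this
        omega
      have := hStep _ hmem
      have heq : (n₀ + (k:ℤ)) + 1 = n₀ + ((k+1 : ℕ) : ℤ) := by push_cast; ring
      rwa [heq] at this
  have hall : ∀ n : ℤ, n₀ ≤ n → n ∈ Dtop U := by
    intro n hn
    have := hnat (n - n₀).toNat
    have heq : n₀ + ((n - n₀).toNat : ℤ) = n := by omega
    rwa [heq] at this
  refine ⟨_, Submodule.fg_span ((Set.finite_Icc 0 n₀).image _), ray_elim U hUP n₀ hall⟩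

end chunk7
section chunk8
variable {K : Type*} [Field K]

def negE : ℤ ≃ ℤ where
  toFun n := -1 - n
  invFun n := -1 - n
  left_inv n := by ring
  right_inv n := by ring

def iot (K : Type*) [Field K] : K[T;T⁻¹] ≃ₗ[K] K[T;T⁻¹] := (AddMonoidAlgebra.coeffLinearEquiv K).trans ((Finsupp.domLCongr negE).trans
    (AddMonoidAlgebra.coeffLinearEquiv K).symm)

lemma iot_apply (p : K[T;T⁻¹]) (m : ℤ) : (iot K p) m = p (-1 - m) := rfl

lemma iot_iot (p : K[T;T⁻¹]) : iot K (iot K p) = p := by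
  ext m
  rw [iot_apply, iot_apply]
  congr 1
  ring

lemma iot_tau (k : ℤ) (p : K[T;T⁻¹]) : iot K (tau K k p) = tau K (-k) (iot K p) := by
  ext m
  rw [iot_apply, tau_apply, tau_apply, iot_apply]
  congr 1
  ring

lemma map_iot_map_iot (V : Submodule K K[T;T⁻¹]) :
    (V.map (iot K).toLinearMap).map (iot K).toLinearMap = V := by
  apply le_antisymm
  · rintro x ⟨y, ⟨z, hz, rfl⟩, rfl⟩
    simpa [iot_iot] using hz
  · intro x hx
    exact ⟨iot K x, ⟨x, hx, rfl⟩, iot_iot x⟩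

lemma aLE_map (e : K[T;T⁻¹] →ₗ[K] K[T;T⁻¹]) {U W : Submodule K K[T;T⁻¹]} (h : aLE U W) :
    aLE (U.map e) (W.map e) := by
  obtain ⟨X, hX, hUX⟩ := h
  refine ⟨X.map e, hX.map e, ?_⟩
  rw [← Submodule.map_sup]
  exact Submodule.map_mono hUX

lemma map_iot_Ppos : (Ppos K).map (iot K).toLinearMap = Nneg K := by
  apply le_antisymm
  · rintro x ⟨y, hy, rfl⟩
    intro m hm
    rw [LinearEquiv.coe_coe, iot_apply]
    exact hy _ (by simp only [Set.mem_setOf_eq, not_lt] at hm ⊢; omega)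
  · intro x hx
    refine ⟨iot K x, ?_, iot_iot x⟩
    intro m hm
    rw [iot_apply]
    exact hx _ (by simp only [Set.mem_setOf_eq, not_le, not_lt] at hm ⊢; omega)

lemma ray_bot (U W : Submodule K K[T;T⁻¹]) (hUN : U ≤ Nneg K) (h1 : aLE U W)
    (hshift : ∀ p ∈ U ⊓ W, tau K (-1) p ∈ U) (hnfg : ¬ U.FG) : aLE (Nneg K) U := by
  set ι := (iot K).toLinearMap with hι
  have hinv : ∀ p : K[T;T⁻¹], ι (ι p) = p := iot_iot
  have key := ray_top (U.map ι) (W.map ι) ?_ (aLE_map ι h1) ?_ ?_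
  · have := aLE_map ι key
    rw [map_iot_map_iot] at this
    rw [← map_iot_Ppos]
    exact this
  · -- U.map ι ≤ Ppos
    rintro x ⟨y, hy, rfl⟩
    intro m hm
    show (iot K y) m = 0
    rw [iot_apply]
    exact hUN hy _ (by simp only [Set.mem_setOf_eq, not_le] at hm ⊢; omega)
  · -- shift condition
    rintro q ⟨⟨a, haU, rfl⟩, hqW⟩
    obtain ⟨b, hbW, hba⟩ := hqW
    have hab : a = b := by
      have h2 : ι (ι b) = ι (ι a) := congrArg ι hba
      rw [hinv, hinv] at h2
      exact h2.symm
    have haUW : a ∈ U ⊓ W := ⟨haU, hab ▸ hbW⟩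
    refine ⟨tau K (-1) a, hshift a haUW, ?_⟩
    show iot K (tau K (-1) a) = tau K 1 (iot K a)
    rw [iot_tau]
    norm_num
  · -- ¬ FG
    intro hfg
    apply hnfg
    have := hfg.map ι
    rwa [map_iot_map_iot] at this

end chunk8
section chunk9
variable {K : Type*} [Field K]

lemma mem_span_of_supp (S : Set ℤ) (p : K[T;T⁻¹]) (hp : p ∈ suppSub K S) :
    p ∈ Submodule.span K ((fun k => (T k : K[T;T⁻¹])) '' S) := by
  classical
  have hsum : (Finsupp.sum p.coeff fun a c => AddMonoidAlgebra.single a c) = p :=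
    AddMonoidAlgebra.sum_coeff_single p
  rw [← hsum]
  apply Submodule.sum_mem
  intro a ha
  show (AddMonoidAlgebra.single a (p a) : K[T;T⁻¹]) ∈ Submodule.span K ((fun k => (T k : K[T;T⁻¹])) '' S)
  have haS : a ∈ S := by
    by_contra hcon
    exact (Finsupp.mem_support_iff.mp ha) (hp a hcon)
  have h1 : (AddMonoidAlgebra.single a (p a) : K[T;T⁻¹]) = (p a) • (T a : K[T;T⁻¹]) := by
    rw [show (T a : K[T;T⁻¹]) = AddMonoidAlgebra.single a 1 from rfl, AddMonoidAlgebra.smul_single,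
      smul_eq_mul, mul_one]
  rw [h1]
  exact Submodule.smul_mem _ _ (Submodule.subset_span ⟨a, haS, rfl⟩)

lemma span_supp_eq (S : Set ℤ) :
    Submodule.span K ((fun k => (T k : K[T;T⁻¹])) '' S) = suppSub K S := by
  apply le_antisymm
  · rw [Submodule.span_le]
    rintro x ⟨k, hk, rfl⟩
    exact T_mem_suppSub hk
  · exact fun p hp => mem_span_of_supp S p hp

lemma spanTnat_eq :
    Submodule.span K (Set.range fun n : ℕ => (T (n : ℤ) : K[T;T⁻¹])) = Ppos K := by
  rw [show (Set.range fun n : ℕ => (T (n : ℤ) : K[T;T⁻¹]))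
      = (fun k => (T k : K[T;T⁻¹])) '' {m : ℤ | 0 ≤ m} from ?_, span_supp_eq]
  · rfl
  · ext x
    constructor
    · rintro ⟨n, rfl⟩
      exact ⟨(n:ℤ), Int.ofNat_nonneg n, rfl⟩
    · rintro ⟨k, hk, rfl⟩
      refine ⟨k.toNat, ?_⟩
      show (T ((k.toNat : ℕ) : ℤ) : K[T;T⁻¹]) = T k
      congr 1
      simp only [Set.mem_setOf_eq] at hk
      omega

lemma spanTneg_eq :
    Submodule.span K (Set.range fun n : ℕ => (T (-(n : ℤ)) : K[T;T⁻¹])) = Pnp K := by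
  rw [show (Set.range fun n : ℕ => (T (-(n : ℤ)) : K[T;T⁻¹]))
      = (fun k => (T k : K[T;T⁻¹])) '' {m : ℤ | m ≤ 0} from ?_, span_supp_eq]
  · rfl
  · ext x
    constructor
    · rintro ⟨n, rfl⟩
      exact ⟨-(n:ℤ), by simp, rfl⟩
    · rintro ⟨k, hk, rfl⟩
      refine ⟨(-k).toNat, ?_⟩
      show (T (-(((-k).toNat : ℕ) : ℤ)) : K[T;T⁻¹]) = T k
      congr 1
      simp only [Set.mem_setOf_eq] at hk
      omega

lemma Nneg_le_Pnp : Nneg K ≤ Pnp K :=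
  suppSub_mono (fun m hm => show m ≤ 0 from le_of_lt hm)

lemma Pnp_le_sup : Pnp K ≤ Nneg K ⊔ Submodule.span K {(T 0 : K[T;T⁻¹])} := by
  intro p hp
  rw [Submodule.mem_sup]
  refine ⟨p - (p 0) • (T 0 : K[T;T⁻¹]), ?_, (p 0) • (T 0 : K[T;T⁻¹]),
    Submodule.smul_mem _ _ (Submodule.mem_span_singleton_self _), by ring⟩
  intro m hm
  simp only [Set.mem_setOf_eq, not_lt] at hm
  rw [AddMonoidAlgebra.coeff_sub, AddMonoidAlgebra.coeff_smul, Finsupp.sub_apply, Finsupp.smul_apply, T_apply]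
  rcases eq_or_lt_of_le hm with hEq | hLt
  · rw [if_pos hEq.symm.symm]
    rw [smul_eq_mul, mul_one, ← hEq, sub_self]
  · rw [if_neg (by omega), smul_zero, sub_zero]
    exact hp m (by simp only [Set.mem_setOf_eq]; omega)

lemma top_le_PN : (⊤ : Submodule K K[T;T⁻¹]) ≤ Ppos K ⊔ Nneg K := by
  intro p _
  rw [Submodule.mem_sup]
  classical
  have hq : ∃ q : K[T;T⁻¹], ∀ m : ℤ, q m = if 0 ≤ m then p m else 0 := by
    refine ⟨AddMonoidAlgebra.ofCoeff (Finsupp.filter (fun m => 0 ≤ m) p.coeff), ?_⟩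
    intro m
    exact Finsupp.filter_apply (fun m => 0 ≤ m) p.coeff m
  obtain ⟨q, hqspec⟩ := hq
  refine ⟨q, ?_, p - q, ?_, by ring⟩
  · intro m hm
    rw [hqspec, if_neg (by simpa using hm)]
  · intro m hm
    simp only [Set.mem_setOf_eq, not_lt] at hm
    rw [AddMonoidAlgebra.coeff_sub, Finsupp.sub_apply, hqspec, if_pos hm, sub_self]

end chunk9
section chunk10
variable {K : Type*} [Field K]

lemma map_tau_cancel (n : ℤ) (V : Submodule K K[T;T⁻¹]) :
    (V.map (tau K n).toLinearMap).map (tau K (-n)).toLinearMap = V := by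
  apply le_antisymm
  · rintro x ⟨y, ⟨z, hz, rfl⟩, rfl⟩
    have : tau K (-n) (tau K n z) = z := by rw [tau_comp]; simp [tau_zero]
    simpa [this] using hz
  · intro x hx
    refine ⟨tau K n x, ⟨x, hx, rfl⟩, ?_⟩
    show tau K (-n) (tau K n x) = x
    rw [tau_comp]; simp [tau_zero]

lemma fg_bdd {Y : Submodule K K[T;T⁻¹]} (hY : Y.FG) :
    ∃ S : Finset ℤ, Y ≤ suppSub K ↑S := by
  classical
  obtain ⟨s, hs⟩ := hY
  refine ⟨s.biUnion (fun p => Finsupp.support p.coeff), ?_⟩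
  rw [← hs, Submodule.span_le]
  intro p hp m hm
  by_contra hc
  exact hm (Finset.mem_coe.mpr (Finset.mem_biUnion.mpr
    ⟨p, hp, Finsupp.mem_support_iff.mpr hc⟩))

lemma cross_fg_N {A Y : Submodule K K[T;T⁻¹]} (hY : Y.FG) (hAn : (A ⊓ Nneg K).FG) :
    (A ⊓ (Y ⊔ Nneg K)).FG := by
  classical
  obtain ⟨S, hS⟩ := fg_bdd hY
  apply fg_of_coords _ (A ⊓ Nneg K) (S.filter (fun m => 0 ≤ m)) hAn
  rintro x ⟨hxA, hxYN⟩ hvan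
  refine ⟨hxA, ?_⟩
  intro m hm
  simp only [Set.mem_setOf_eq, not_lt] at hm
  obtain ⟨y, hy, ν, hν, hyν⟩ := Submodule.mem_sup.mp hxYN
  by_cases hmS : m ∈ S
  · exact hvan m (Finset.mem_filter.mpr ⟨hmS, hm⟩)
  · have h1 : y m = 0 := hS hy m (by simpa using hmS)
    have h2 : ν m = 0 := hν m (by simp only [Set.mem_setOf_eq, not_lt]; omega)
    rw [← hyν, AddMonoidAlgebra.coeff_add, Finsupp.add_apply, h1, h2, add_zero]

lemma cross_fg_P {A Y : Submodule K K[T;T⁻¹]} (hY : Y.FG) (hAp : (A ⊓ Ppos K).FG) :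
    (A ⊓ (Y ⊔ Ppos K)).FG := by
  classical
  obtain ⟨S, hS⟩ := fg_bdd hY
  apply fg_of_coords _ (A ⊓ Ppos K) (S.filter (fun m => m < 0)) hAp
  rintro x ⟨hxA, hxYP⟩ hvan
  refine ⟨hxA, ?_⟩
  intro m hm
  simp only [Set.mem_setOf_eq, not_le] at hm
  obtain ⟨y, hy, ν, hν, hyν⟩ := Submodule.mem_sup.mp hxYP
  by_cases hmS : m ∈ S
  · exact hvan m (Finset.mem_filter.mpr ⟨hmS, hm⟩)
  · have h1 : y m = 0 := hS hy m (by simpa using hmS)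
    have h2 : ν m = 0 := hν m (by simp only [Set.mem_setOf_eq, not_le]; omega)
    rw [← hyν, AddMonoidAlgebra.coeff_add, Finsupp.add_apply, h1, h2, add_zero]

lemma almostEqual_of_aLE {U W : Submodule K K[T;T⁻¹]} (h1 : aLE U W) (h2 : aLE W U) :
    AlmostEqual U W := by
  constructor
  · exact fd_of_aLE h1
  · have := fd_of_aLE h2
    rwa [inf_comm W U] at this

lemma tau_mem_Ppos {p : K[T;T⁻¹]} (hp : p ∈ Ppos K) : tau K 1 p ∈ Ppos K := by
  intro m hm
  rw [tau_apply]
  exact hp _ (by simp only [Set.mem_setOf_eq, not_le] at hm ⊢; omega)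

lemma tau_mem_Nneg {p : K[T;T⁻¹]} (hp : p ∈ Nneg K) : tau K (-1) p ∈ Nneg K := by
  intro m hm
  rw [tau_apply]
  exact hp _ (by simp only [Set.mem_setOf_eq, not_lt] at hm ⊢; omega)

/-- decomposition of an element into positive and negative parts -/
lemma exists_posneg (p : K[T;T⁻¹]) : ∃ q r : K[T;T⁻¹], q ∈ Ppos K ∧ r ∈ Nneg K ∧ p = q + r := by
  have := top_le_PN (K := K) (Submodule.mem_top (x := p))
  obtain ⟨q, hq, r, hr, hqr⟩ := Submodule.mem_sup.mp this
  exact ⟨q, r, hq, hr, hqr.symm⟩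

end chunk10
section chunk11
variable {K : Type*} [Field K]

lemma fg_of_thin (A : Submodule K K[T;T⁻¹]) (hAp : (A ⊓ Ppos K).FG) (hAn : (A ⊓ Nneg K).FG)
    (hT2 : aLE A (A.map (tau K (-1)).toLinearMap)) : A.FG := by
  classical
  obtain ⟨X2, hX2, hAX2⟩ := hT2
  set E := X2.map (tau K 1).toLinearMap with hEdef
  have hE : A.map (tau K 1).toLinearMap ≤ A ⊔ E := by
    have h1 : A.map (tau K 1).toLinearMap ≤
        (A.map (tau K (-1)).toLinearMap ⊔ X2).map (tau K 1).toLinearMap :=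
      Submodule.map_mono hAX2
    rw [Submodule.map_sup] at h1
    have h2 := map_tau_cancel (-1) A
    rw [show -(-1 : ℤ) = 1 by norm_num] at h2
    rwa [h2] at h1
  obtain ⟨SE, hSE⟩ := fg_bdd (hX2.map (tau K 1).toLinearMap)
  set ME : ℤ := ((SE.sup (fun x => x.natAbs) : ℕ) : ℤ) with hMEdef
  have hME0 : 0 ≤ ME := Int.ofNat_nonneg _
  have hEbd : ∀ e ∈ E, ∀ m : ℤ, (m < -ME ∨ ME < m) → e m = 0 := by
    intro e he m hm
    apply hSE he
    intro hc
    have hle2 : m.natAbs ≤ SE.sup (fun x => x.natAbs) := Finset.le_sup (Finset.mem_coe.mp hc)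
    have habs : (m.natAbs : ℤ) = |m| := Int.natCast_natAbs m
    rw [hMEdef] at hm
    omega
  have hiter : ∀ k : ℕ, ∀ a ∈ A, ∃ α ∈ A, ∃ ε : K[T;T⁻¹],
      (∀ m : ℤ, m < -ME → ε m = 0) ∧ (∀ m : ℤ, ME + k ≤ m → ε m = 0) ∧
      tau K (k : ℤ) a = α + ε := by
    intro k
    induction k with
    | zero =>
      intro a ha
      refine ⟨a, ha, 0, fun m _ => rfl, fun m _ => rfl, ?_⟩
      rw [show ((0:ℕ):ℤ) = 0 from rfl, tau_zero, add_zero]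
    | succ k ih =>
      intro a ha
      obtain ⟨α, hα, ε, hε1, hε2, heq⟩ := ih a ha
      have hmem : tau K 1 α ∈ A ⊔ E := hE ⟨α, hα, rfl⟩
      obtain ⟨α', hα', e, he, heq2⟩ := Submodule.mem_sup.mp hmem
      refine ⟨α', hα', tau K 1 ε + e, ?_, ?_, ?_⟩
      · intro m hm
        have e0 : e m = 0 := hEbd e he m (Or.inl hm)
        have ε0 : ε (m - 1) = 0 := hε1 _ (by omega)
        have htv : (tau K 1 ε) m = ε (m - 1) := tau_apply ε 1 m
        have hadd : (tau K 1 ε + e) m = (tau K 1 ε) m + e m := by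
          rw [AddMonoidAlgebra.coeff_add, Finsupp.add_apply]
        simp [hadd, htv, ε0, e0]
      · intro m hm
        push_cast at hm
        have e0 : e m = 0 := hEbd e he m (Or.inr (by omega))
        have ε0 : ε (m - 1) = 0 := hε2 _ (by omega)
        have htv : (tau K 1 ε) m = ε (m - 1) := tau_apply ε 1 m
        have hadd : (tau K 1 ε + e) m = (tau K 1 ε) m + e m := by
          rw [AddMonoidAlgebra.coeff_add, Finsupp.add_apply]
        simp [hadd, htv, ε0, e0]
      · have h3 : tau K ((k+1 : ℕ) : ℤ) a = tau K 1 (tau K (k:ℤ) a) := by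
          rw [tau_comp, show ((k:ℤ) + 1) = ((k+1:ℕ):ℤ) by push_cast; ring]
        rw [h3, heq, map_add, ← heq2]
        ring
  set F := A ⊓ suppSub K {m : ℤ | -ME ≤ m} with hFdef
  have hFfg : F.FG := by
    apply fg_of_coords F (A ⊓ Ppos K) (Finset.Icc (-ME) (-1)) hAp
    rintro x ⟨hxA, hxS⟩ hvan
    refine ⟨hxA, ?_⟩
    intro m hm
    simp only [Set.mem_setOf_eq, not_le] at hm
    by_cases hge : -ME ≤ m
    · exact hvan m (Finset.mem_Icc.mpr ⟨hge, by omega⟩)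
    · exact hxS m (by simp only [Set.mem_setOf_eq]; omega)
  obtain ⟨SF, hSF⟩ := fg_bdd hFfg
  set MF : ℤ := ((SF.sup (fun x => x.natAbs) : ℕ) : ℤ) with hMFdef
  have hFbd : ∀ f ∈ F, ∀ m : ℤ, MF < m → f m = 0 := by
    intro f hf m hm
    apply hSF hf
    intro hc
    have hle2 : m.natAbs ≤ SF.sup (fun x => x.natAbs) := Finset.le_sup (Finset.mem_coe.mp hc)
    have habs : (m.natAbs : ℤ) = |m| := Int.natCast_natAbs m
    rw [hMFdef] at hm
    omega
  set C0 : ℤ := max MF ME with hC0def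
  have hclaim : ∀ a ∈ A, ∀ m : ℤ, C0 < m → a m = 0 := by
    intro a ha
    by_cases haz : a = 0
    · intro m _; rw [haz]; rfl
    obtain ⟨n₀, hn₀⟩ := exists_topAt haz
    suffices hns : n₀ ≤ C0 by
      intro m hm
      exact hn₀.2 m (by omega)
    by_contra hbig
    push_neg at hbig
    obtain ⟨k, hk⟩ := exists_suppBound a
    obtain ⟨α, hα, ε, hε1, hε2, heq⟩ := hiter k a ha
    have hαF : α ∈ F := by
      refine ⟨hα, ?_⟩
      intro m hm
      simp only [Set.mem_setOf_eq, not_le] at hm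
      have h1 : (tau K (k:ℤ) a) m = 0 := by
        rw [tau_apply]
        apply hk
        rw [abs_of_nonpos (by omega)]
        omega
      have h2 : α m = (tau K (k:ℤ) a) m - ε m := by
        have hadd : (tau K (k:ℤ) a) m = α m + ε m := by
          rw [heq, AddMonoidAlgebra.coeff_add, Finsupp.add_apply]
        rw [hadd]; ring
      rw [h2, h1, hε1 m (by omega), sub_zero]
    have h1 : (tau K (k:ℤ) a) (n₀ + k) = a n₀ := by
      rw [tau_apply]; congr 1; ring
    have h2 : α (n₀ + k) = 0 := hFbd α hαF _ (by omega)
    have h3 : ε (n₀ + k) = 0 := hε2 _ (by omega)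
    apply hn₀.1
    have hval : (tau K (k:ℤ) a) (n₀ + k) = α (n₀ + k) + ε (n₀ + k) := by
      rw [heq, AddMonoidAlgebra.coeff_add, Finsupp.add_apply]
    rw [h1, h2, h3, add_zero] at hval
    exact hval
  apply fg_of_coords A (A ⊓ Nneg K) (Finset.Icc 0 C0) hAn
  intro x hxA hvan
  refine ⟨hxA, ?_⟩
  intro m hm
  simp only [Set.mem_setOf_eq, not_lt] at hm
  by_cases hle : m ≤ C0
  · exact hvan m (Finset.mem_Icc.mpr ⟨hm, hle⟩)
  · exact hclaim x hxA m (by omega)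

end chunk11
end AIL
end

/-- If `A` is a `G`-almost invariant subspace of the Laurent polynomial ring `B = K[x,x⁻¹]`
(the group algebra of the infinite cyclic group `G = ⟨x⟩`), then `A` is almost equal to one of
`0`, `K[x]`, `K[x⁻¹]`, `B`. -/
theorem almost_invariant_subspace_of_laurent (K : Type*) [Field K]
    (A : Submodule K K[T;T⁻¹])
    (h₁ : FiniteDimensional K
      (A ⧸ (A ⊓ A.map (LinearMap.mulRight K (T 1))).comap A.subtype))
    (h₂ : FiniteDimensional K
      (A ⧸ (A ⊓ A.map (LinearMap.mulRight K (T (-1)))).comap A.subtype)) :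
    AlmostEqual A ⊥ ∨
      AlmostEqual A (Submodule.span K (Set.range fun n : ℕ => (T (n : ℤ) : K[T;T⁻¹]))) ∨
      AlmostEqual A (Submodule.span K (Set.range fun n : ℕ => (T (-(n : ℤ)) : K[T;T⁻¹]))) ∨
      AlmostEqual A ⊤ := by
  classical
  rw [AIL.mulRight_eq_tau] at h₁ h₂
  have hT1 : AIL.aLE A (A.map (AIL.tau K 1).toLinearMap) := AIL.aLE_of_fd h₁
  have hT2 : AIL.aLE A (A.map (AIL.tau K (-1)).toLinearMap) := AIL.aLE_of_fd h₂
  have rayP : ¬ (A ⊓ AIL.Ppos K).FG → AIL.aLE (AIL.Ppos K) (A ⊓ AIL.Ppos K) := by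
    intro hnfg
    apply AIL.ray_top (A ⊓ AIL.Ppos K) (A.map (AIL.tau K (-1)).toLinearMap) inf_le_right
      (hT2.mono_left inf_le_left) ?_ hnfg
    rintro p ⟨⟨hpA, hpP⟩, ⟨a, haA, rfl⟩⟩
    have hcan : AIL.tau K 1 (AIL.tau K (-1) a) = a := by
      rw [AIL.tau_comp]
      norm_num [AIL.tau_zero]
    constructor
    · show AIL.tau K 1 (AIL.tau K (-1) a) ∈ A
      rw [hcan]; exact haA
    · exact AIL.tau_mem_Ppos hpP
  have rayN : ¬ (A ⊓ AIL.Nneg K).FG → AIL.aLE (AIL.Nneg K) (A ⊓ AIL.Nneg K) := by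
    intro hnfg
    apply AIL.ray_bot (A ⊓ AIL.Nneg K) (A.map (AIL.tau K 1).toLinearMap) inf_le_right
      (hT1.mono_left inf_le_left) ?_ hnfg
    rintro p ⟨⟨hpA, hpN⟩, ⟨a, haA, rfl⟩⟩
    have hcan : AIL.tau K (-1) (AIL.tau K 1 a) = a := by
      rw [AIL.tau_comp]
      norm_num [AIL.tau_zero]
    constructor
    · show AIL.tau K (-1) (AIL.tau K 1 a) ∈ A
      rw [hcan]; exact haA
    · exact AIL.tau_mem_Nneg hpN
  by_cases hp : (A ⊓ AIL.Ppos K).FG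
  · by_cases hn : (A ⊓ AIL.Nneg K).FG
    · -- A is finite dimensional
      left
      have hAfg : A.FG := AIL.fg_of_thin A hp hn hT2
      exact AIL.almostEqual_of_aLE ⟨A, hAfg, le_sup_right⟩ (AIL.aLE_of_le bot_le)
    · -- A is almost K[x⁻¹]
      right; right; left
      rw [AIL.spanTneg_eq]
      obtain ⟨Y, hY, hNY⟩ := rayN hn
      have hXfg : (A ⊓ (Y ⊔ AIL.Ppos K)).FG := AIL.cross_fg_P hY hp
      have hALE : AIL.aLE A (AIL.Pnp K) := by
        refine ⟨A ⊓ (Y ⊔ AIL.Ppos K), hXfg, ?_⟩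
        intro a ha
        obtain ⟨q, r, hq, hr, hqr⟩ := AIL.exists_posneg a
        obtain ⟨u, hu, y, hy, huy⟩ := Submodule.mem_sup.mp (hNY hr)
        have hmem2 : a - u ∈ Y ⊔ AIL.Ppos K :=
          Submodule.mem_sup.mpr ⟨y, hy, q, hq, by rw [hqr, ← huy]; ring⟩
        exact Submodule.mem_sup.mpr ⟨u, AIL.Nneg_le_Pnp hu.2, a - u,
          ⟨Submodule.sub_mem _ ha hu.1, hmem2⟩, by ring⟩
      have hGLE : AIL.aLE (AIL.Pnp K) A := by
        have hPnpN : AIL.aLE (AIL.Pnp K) (AIL.Nneg K) :=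
          ⟨Submodule.span K {(T 0 : K[T;T⁻¹])}, Submodule.fg_span_singleton _, AIL.Pnp_le_sup⟩
        exact hPnpN.trans ((rayN hn).mono_right inf_le_left)
      exact AIL.almostEqual_of_aLE hALE hGLE
  · by_cases hn : (A ⊓ AIL.Nneg K).FG
    · -- A is almost K[x]
      right; left
      rw [AIL.spanTnat_eq]
      obtain ⟨Y, hY, hPY⟩ := rayP hp
      have hXfg : (A ⊓ (Y ⊔ AIL.Nneg K)).FG := AIL.cross_fg_N hY hn
      have hALE : AIL.aLE A (AIL.Ppos K) := by
        refine ⟨A ⊓ (Y ⊔ AIL.Nneg K), hXfg, ?_⟩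
        intro a ha
        obtain ⟨q, r, hq, hr, hqr⟩ := AIL.exists_posneg a
        obtain ⟨u, hu, y, hy, huy⟩ := Submodule.mem_sup.mp (hPY hq)
        have hmem2 : a - u ∈ Y ⊔ AIL.Nneg K :=
          Submodule.mem_sup.mpr ⟨y, hy, r, hr, by rw [hqr, ← huy]; ring⟩
        exact Submodule.mem_sup.mpr ⟨u, hu.2, a - u,
          ⟨Submodule.sub_mem _ ha hu.1, hmem2⟩, by ring⟩
      have hGLE : AIL.aLE (AIL.Ppos K) A := (rayP hp).mono_right inf_le_left
      exact AIL.almostEqual_of_aLE hALE hGLE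
    · -- A is almost everything
      right; right; right
      obtain ⟨Y1, hY1, hPY1⟩ := rayP hp
      obtain ⟨Y2, hY2, hNY2⟩ := rayN hn
      have hGLE : AIL.aLE (⊤ : Submodule K K[T;T⁻¹]) A := by
        refine ⟨Y1 ⊔ Y2, hY1.sup hY2, ?_⟩
        intro p _
        obtain ⟨q, r, hq, hr, hqr⟩ := AIL.exists_posneg p
        obtain ⟨u1, hu1, y1, hy1, h1⟩ := Submodule.mem_sup.mp (hPY1 hq)
        obtain ⟨u2, hu2, y2, hy2, h2⟩ := Submodule.mem_sup.mp (hNY2 hr)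
        have : p = u1 + u2 + (y1 + y2) := by rw [hqr, ← h1, ← h2]; ring
        rw [this]
        apply Submodule.add_mem
        · exact Submodule.mem_sup_left (Submodule.add_mem _ hu1.1 hu2.1)
        · exact Submodule.mem_sup_right (Submodule.add_mem _
            (Submodule.mem_sup_left hy1) (Submodule.mem_sup_right hy2))
      exact AIL.almostEqual_of_aLE (AIL.aLE_of_le le_top) hGLE
end

section
/- Let K be a field and V = ⊕_{n∈ℤ} K, with β : V → V the two-sided Bernoulli shift (x_n)_{n∈ℤ} ↦ (x_{n−1})_{n∈ℤ}. If a K-subspace U of V is linearly β-inert and linearly β⁻¹-inert (i.e., (U + βU)/U and (U + β⁻¹U)/U are finite-dimensional), then U is almost equal to one of: 0, V⁻ = ⊕_{n≤0} K, V⁺ = ⊕_{n≥0} K, or V. -/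
/-- The two-sided Bernoulli shift on `V = ⊕_{n∈ℤ} K`, `(x_n)_{n∈ℤ} ↦ (x_{n-1})_{n∈ℤ}`. -/
noncomputable def bernoulliShift (K : Type*) [Field K] : (ℤ →₀ K) ≃ₗ[K] (ℤ →₀ K) :=
  Finsupp.domLCongr (Equiv.addRight (1 : ℤ))

/-- A subspace `U` is linearly `φ`-inert if `(U + φU)/U` is finite-dimensional. -/
def LinearlyInert {K V : Type*} [Field K] [AddCommGroup V] [Module K V]
    (φ : V →ₗ[K] V) (U : Submodule K V) : Prop :=
  FiniteDimensional K ((↥(U ⊔ U.map φ)) ⧸ U.comap (U ⊔ U.map φ).subtype)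

namespace BernoulliInertProof

variable {K : Type*} [Field K]

lemma shift_apply (x : ℤ →₀ K) (n : ℤ) : bernoulliShift K x n = x (n - 1) := by
  simp [bernoulliShift, Finsupp.domLCongr_apply, sub_eq_add_neg]

lemma shift_symm_apply (x : ℤ →₀ K) (n : ℤ) : (bernoulliShift K).symm x n = x (n + 1) := by
  simp [bernoulliShift, Finsupp.domLCongr_symm, Finsupp.domLCongr_apply]

lemma finquot_of_le_sup {Vv : Type*} [AddCommGroup Vv] [Module K Vv] {A B W : Submodule K Vv}
    (hW : FiniteDimensional K W) (h : B ≤ A ⊔ W) :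
    FiniteDimensional K (↥B ⧸ (A ⊓ B).comap B.subtype) := by
  let f : ↥B →ₗ[K] Vv ⧸ A := A.mkQ.comp B.subtype
  have hker : LinearMap.ker f = (A ⊓ B).comap B.subtype := by
    rw [Submodule.comap_inf, Submodule.comap_subtype_self, inf_top_eq]
    simp [f, LinearMap.ker_comp, Submodule.ker_mkQ]
  have hbot : A.map A.mkQ = ⊥ := by
    rw [eq_bot_iff, Submodule.map_le_iff_le_comap]
    intro x hx
    simpa [Submodule.mem_comap, Submodule.Quotient.mk_eq_zero] using hx
  have hrange : LinearMap.range f ≤ W.map A.mkQ := by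
    rw [LinearMap.range_comp, Submodule.range_subtype]
    refine le_trans (Submodule.map_mono h) ?_
    rw [Submodule.map_sup, hbot, bot_sup_eq]
  haveI : FiniteDimensional K (W.map A.mkQ) := Module.Finite.map W A.mkQ
  haveI : FiniteDimensional K (LinearMap.range f) := Submodule.finiteDimensional_of_le hrange
  haveI : FiniteDimensional K (↥B ⧸ LinearMap.ker f) :=
    (LinearMap.quotKerEquivRange f).symm.finiteDimensional
  rwa [hker] at this

lemma exists_findim_sup {Vv : Type*} [AddCommGroup Vv] [Module K Vv] {A B : Submodule K Vv}
    (h : FiniteDimensional K (↥B ⧸ A.comap B.subtype)) :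
    ∃ W : Submodule K Vv, FiniteDimensional K W ∧ B ≤ A ⊔ W := by
  obtain ⟨q, hq⟩ := Submodule.exists_isCompl (A.comap B.subtype)
  haveI : FiniteDimensional K q := (Submodule.quotientEquivOfIsCompl _ q hq).finiteDimensional
  refine ⟨q.map B.subtype, Module.Finite.map q B.subtype, ?_⟩
  intro b hb
  have hmem : (⟨b, hb⟩ : ↥B) ∈ (A.comap B.subtype) ⊔ q := by rw [hq.sup_eq_top]; trivial
  obtain ⟨x, hx, y, hy, hxy⟩ := Submodule.mem_sup.mp hmem
  refine Submodule.mem_sup.mpr ⟨↑x, hx, ↑y, ⟨y, hy, rfl⟩, ?_⟩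
  exact congrArg Subtype.val hxy

lemma findim_supported {s : Set ℤ} (hs : s.Finite) :
    FiniteDimensional K (Finsupp.supported K K s) := by
  haveI := hs.fintype
  haveI : FiniteDimensional K (↥s →₀ K) :=
    (Finsupp.linearEquivFunOnFinite K K ↥s).symm.finiteDimensional
  exact (Finsupp.supportedEquivFinsupp (M := K) (R := K) s).symm.finiteDimensional

lemma findim_seg (a b : ℤ) :
    FiniteDimensional K (Finsupp.supported K K {n : ℤ | a ≤ n ∧ n ≤ b}) := by
  have : {n : ℤ | a ≤ n ∧ n ≤ b} = Set.Icc a b := rfl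
  rw [this]; exact findim_supported (Set.finite_Icc a b)

lemma findim_le_supported (W : Submodule K (ℤ →₀ K)) [FiniteDimensional K W] :
    ∃ A : ℤ, 1 ≤ A ∧ W ≤ Finsupp.supported K K {n : ℤ | -A ≤ n ∧ n ≤ A} := by
  obtain ⟨s, hs⟩ := (Submodule.fg_top W).mp (Module.finite_def.mp ‹_›)
  refine ⟨1 + ((s.sup fun f => f.support.sup fun n => n.natAbs : ℕ) : ℤ), by omega, ?_⟩
  rw [← hs, Submodule.span_le]
  intro f hf
  rw [SetLike.mem_coe, Finsupp.mem_supported]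
  intro n hn
  have h1 : n.natAbs ≤ f.support.sup fun n => n.natAbs := Finset.le_sup hn
  have h2 : (f.support.sup fun n => n.natAbs) ≤ s.sup fun f => f.support.sup fun n => n.natAbs :=
    Finset.le_sup (f := fun f : ℤ →₀ K => f.support.sup fun n => n.natAbs) hf
  constructor <;> omega

lemma ray_right {U F : Submodule K (ℤ →₀ K)} {A : ℤ}
    (hF : F ≤ Finsupp.supported K K {n : ℤ | -A ≤ n ∧ n ≤ A})
    (hU : ∀ u ∈ U, bernoulliShift K u ∈ U ⊔ F)
    {u : ℤ →₀ K} (hu : u ∈ U) {m : ℤ} (hm : A < m) (hum : u m ≠ 0)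
    (hdeg : ∀ n, m < n → u n = 0) :
    ∃ M : ℤ, ∀ j : ℕ, ∃ w ∈ U, w (M + j) ≠ 0 ∧ (∀ n, M + j < n → w n = 0) ∧
      (∀ n, n < -A → w n = 0) := by
  have hne : u.support.Nonempty := ⟨m, Finsupp.mem_support_iff.mpr hum⟩
  set v := u.support.min' hne with hv
  have hvlow : ∀ n, n < v → u n = 0 := by
    intro n hn
    by_contra h
    exact absurd (u.support.min'_le n (Finsupp.mem_support_iff.mpr h)) (by omega)
  have key : ∀ k : ℕ, ∃ uk fk : ℤ →₀ K, uk ∈ U ∧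
      (∀ n, n < -A → fk n = 0) ∧ (∀ n, A + k ≤ n → fk n = 0) ∧
      (∀ n, uk n + fk n = u (n - k)) := by
    intro k
    induction k with
    | zero => exact ⟨u, 0, hu, by simp, by simp, by simp⟩
    | succ k ih =>
      obtain ⟨uk, fk, h1, h2, h3, h4⟩ := ih
      obtain ⟨u', hu', f', hf', heq⟩ := Submodule.mem_sup.mp (hU uk h1)
      have hf'0 : ∀ n, n < -A ∨ A < n → f' n = 0 := by
        intro n hn
        have := (Finsupp.mem_supported' K f').mp (hF hf') n
          (by simp only [Set.mem_setOf_eq, not_and, not_le]; intro hA; omega)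
        exact this
      refine ⟨u', f' + bernoulliShift K fk, hu', ?_, ?_, ?_⟩
      · intro n hn
        rw [Finsupp.add_apply, shift_apply, hf'0 n (Or.inl hn), h2 (n-1) (by omega), add_zero]
      · intro n hn
        push_cast at hn
        rw [Finsupp.add_apply, shift_apply, hf'0 n (Or.inr (by omega)),
          h3 (n-1) (by omega), add_zero]
      · intro n
        have e1 : u' n + f' n = uk (n - 1) := by
          have := congrArg (fun z => z n) heq
          simpa [Finsupp.add_apply, shift_apply] using this
        have e2 := h4 (n - 1)
        rw [Finsupp.add_apply, shift_apply]
        push_cast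
        have harg : n - 1 - (k : ℤ) = n - ((k : ℤ) + 1) := by ring
        rw [harg] at e2
        linear_combination e1 + e2
  refine ⟨m + ((-A - v).toNat : ℤ), ?_⟩
  intro j
  obtain ⟨uk, fk, h1, h2, h3, h4⟩ := key ((-A - v).toNat + j)
  set k := ((-A - v).toNat + j : ℕ) with hk
  have hkv : -A - v ≤ (k : ℤ) := by
    have := Int.self_le_toNat (-A - v)
    push_cast [hk]; omega
  have hMj : m + ((-A - v).toNat : ℤ) + j = m + k := by push_cast [hk]; ring
  refine ⟨uk, h1, ?_, ?_, ?_⟩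
  · rw [hMj]
    have h4' := h4 (m + k)
    have hfk : fk (m + k) = 0 := h3 _ (by omega)
    have huk : uk (m + k) = u m := by
      have harg : m + (k:ℤ) - k = m := by ring
      rw [hfk, add_zero, harg] at h4'; exact h4'
    rw [huk]; exact hum
  · intro n hn
    rw [hMj] at hn
    have h4' := h4 n
    rw [h3 n (by omega), add_zero, hdeg (n - k) (by omega)] at h4'
    exact h4'
  · intro n hn
    have h4' := h4 n
    rw [h2 n hn, add_zero, hvlow (n - k) (by omega)] at h4'
    exact h4'

lemma elim_right {U : Submodule K (ℤ →₀ K)} {A M : ℤ}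
    (hw : ∀ j : ℕ, ∃ w ∈ U, w (M + j) ≠ 0 ∧ (∀ n, M + j < n → w n = 0) ∧
      (∀ n, n < -A → w n = 0)) :
    Finsupp.supported K K {n : ℤ | -A ≤ n} ≤
      U ⊔ Finsupp.supported K K {n : ℤ | -A ≤ n ∧ n ≤ M} := by
  have Q : ∀ j : ℕ, ∀ x : ℤ →₀ K, (∀ n, n < -A → x n = 0) → (∀ n, M + j < n → x n = 0) →
      x ∈ U ⊔ Finsupp.supported K K {n : ℤ | -A ≤ n ∧ n ≤ M} := by
    intro j
    induction j with
    | zero =>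
      intro x h1 h2
      apply Submodule.mem_sup_right
      rw [Finsupp.mem_supported']
      intro n hn
      simp only [Set.mem_setOf_eq, not_and, not_le] at hn
      by_cases hna : -A ≤ n
      · exact h2 n (by have := hn hna; omega)
      · exact h1 n (by omega)
    | succ j ih =>
      intro x h1 h2
      obtain ⟨w, hwU, hw1, hw2, hw3⟩ := hw (j + 1)
      set c := x (M + (j + 1 : ℕ)) / w (M + (j + 1 : ℕ)) with hc
      have hx' : x - c • w ∈ U ⊔ Finsupp.supported K K {n : ℤ | -A ≤ n ∧ n ≤ M} := by
        apply ih
        · intro n hn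
          rw [Finsupp.sub_apply, Finsupp.smul_apply, h1 n hn, hw3 n hn, smul_zero, sub_zero]
        · intro n hn
          rw [Finsupp.sub_apply, Finsupp.smul_apply]
          rcases eq_or_lt_of_le (show M + ((j : ℤ) + 1) ≤ n by omega) with h | h
          · rw [← h]
            have harg : (M + ((j:ℤ)+1)) = M + ((j+1 : ℕ) : ℤ) := by push_cast; ring
            rw [harg, hc, smul_eq_mul, div_mul_cancel₀ _ hw1, sub_self]
          · rw [h2 n (by push_cast; omega), hw2 n (by push_cast; omega),
              smul_zero, sub_zero]
      have hxx : x = (x - c • w) + c • w := by abel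
      rw [hxx]
      exact Submodule.add_mem _ hx' (Submodule.mem_sup_left (Submodule.smul_mem _ _ hwU))
  intro x hx
  rw [Finsupp.mem_supported'] at hx
  by_cases hxe : x.support.Nonempty
  · set B := x.support.max' hxe with hB
    have hBs : ∀ n, B < n → x n = 0 := by
      intro n hn
      by_contra h
      exact absurd (x.support.le_max' n (Finsupp.mem_support_iff.mpr h)) (by omega)
    refine Q (B - M).toNat x (fun n hn => hx n (by simpa using (by omega))) ?_
    intro n hn
    have := Int.self_le_toNat (B - M)
    exact hBs n (by omega)
  · have hx0 : x = 0 := by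
      ext n
      by_contra h
      exact hxe ⟨n, Finsupp.mem_support_iff.mpr h⟩
    rw [hx0]; exact Submodule.zero_mem _

lemma ray_left {U F : Submodule K (ℤ →₀ K)} {A : ℤ}
    (hF : F ≤ Finsupp.supported K K {n : ℤ | -A ≤ n ∧ n ≤ A})
    (hU : ∀ u ∈ U, (bernoulliShift K).symm u ∈ U ⊔ F)
    {u : ℤ →₀ K} (hu : u ∈ U) {m : ℤ} (hm : m < -A) (hum : u m ≠ 0)
    (hlow : ∀ n, n < m → u n = 0) :
    ∃ M : ℤ, ∀ j : ℕ, ∃ w ∈ U, w (M - j) ≠ 0 ∧ (∀ n, n < M - j → w n = 0) ∧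
      (∀ n, A < n → w n = 0) := by
  have hne : u.support.Nonempty := ⟨m, Finsupp.mem_support_iff.mpr hum⟩
  set v := u.support.max' hne with hv
  have hvhigh : ∀ n, v < n → u n = 0 := by
    intro n hn
    by_contra h
    exact absurd (u.support.le_max' n (Finsupp.mem_support_iff.mpr h)) (by omega)
  have key : ∀ k : ℕ, ∃ uk fk : ℤ →₀ K, uk ∈ U ∧
      (∀ n, A < n → fk n = 0) ∧ (∀ n, n ≤ -A - k → fk n = 0) ∧
      (∀ n, uk n + fk n = u (n + k)) := by
    intro k
    induction k with
    | zero => exact ⟨u, 0, hu, by simp, by simp, by simp⟩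
    | succ k ih =>
      obtain ⟨uk, fk, h1, h2, h3, h4⟩ := ih
      obtain ⟨u', hu', f', hf', heq⟩ := Submodule.mem_sup.mp (hU uk h1)
      have hf'0 : ∀ n, n < -A ∨ A < n → f' n = 0 := by
        intro n hn
        have := (Finsupp.mem_supported' K f').mp (hF hf') n
          (by simp only [Set.mem_setOf_eq, not_and, not_le]; intro hA; omega)
        exact this
      refine ⟨u', f' + (bernoulliShift K).symm fk, hu', ?_, ?_, ?_⟩
      · intro n hn
        rw [Finsupp.add_apply, shift_symm_apply, hf'0 n (Or.inr hn), h2 (n+1) (by omega),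
          add_zero]
      · intro n hn
        push_cast at hn
        rw [Finsupp.add_apply, shift_symm_apply, hf'0 n (Or.inl (by omega)),
          h3 (n+1) (by omega), add_zero]
      · intro n
        have e1 : u' n + f' n = uk (n + 1) := by
          have := congrArg (fun z => z n) heq
          simpa [Finsupp.add_apply, shift_symm_apply] using this
        have e2 := h4 (n + 1)
        rw [Finsupp.add_apply, shift_symm_apply]
        push_cast
        have harg : n + 1 + (k : ℤ) = n + ((k : ℤ) + 1) := by ring
        rw [harg] at e2
        linear_combination e1 + e2
  refine ⟨m - ((v - A).toNat : ℤ), ?_⟩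
  intro j
  obtain ⟨uk, fk, h1, h2, h3, h4⟩ := key ((v - A).toNat + j)
  set k := ((v - A).toNat + j : ℕ) with hk
  have hkv : v - A ≤ (k : ℤ) := by
    have := Int.self_le_toNat (v - A)
    push_cast [hk]; omega
  have hMj : m - ((v - A).toNat : ℤ) - j = m - k := by push_cast [hk]; ring
  refine ⟨uk, h1, ?_, ?_, ?_⟩
  · rw [hMj]
    have h4' := h4 (m - k)
    have hfk : fk (m - k) = 0 := h3 _ (by omega)
    have huk : uk (m - k) = u m := by
      have harg : m - (k:ℤ) + k = m := by ring
      rw [hfk, add_zero, harg] at h4'; exact h4'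
    rw [huk]; exact hum
  · intro n hn
    rw [hMj] at hn
    have h4' := h4 n
    rw [h3 n (by omega), add_zero, hlow (n + k) (by omega)] at h4'
    exact h4'
  · intro n hn
    have h4' := h4 n
    rw [h2 n hn, add_zero, hvhigh (n + k) (by omega)] at h4'
    exact h4'

lemma elim_left {U : Submodule K (ℤ →₀ K)} {A M : ℤ}
    (hw : ∀ j : ℕ, ∃ w ∈ U, w (M - j) ≠ 0 ∧ (∀ n, n < M - j → w n = 0) ∧
      (∀ n, A < n → w n = 0)) :
    Finsupp.supported K K {n : ℤ | n ≤ A} ≤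
      U ⊔ Finsupp.supported K K {n : ℤ | M ≤ n ∧ n ≤ A} := by
  have Q : ∀ j : ℕ, ∀ x : ℤ →₀ K, (∀ n, A < n → x n = 0) → (∀ n, n < M - j → x n = 0) →
      x ∈ U ⊔ Finsupp.supported K K {n : ℤ | M ≤ n ∧ n ≤ A} := by
    intro j
    induction j with
    | zero =>
      intro x h1 h2
      apply Submodule.mem_sup_right
      rw [Finsupp.mem_supported']
      intro n hn
      simp only [Set.mem_setOf_eq, not_and, not_le] at hn
      by_cases hna : M ≤ n
      · exact h1 n (by have := hn hna; omega)
      · exact h2 n (by omega)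
    | succ j ih =>
      intro x h1 h2
      obtain ⟨w, hwU, hw1, hw2, hw3⟩ := hw (j + 1)
      set c := x (M - (j + 1 : ℕ)) / w (M - (j + 1 : ℕ)) with hc
      have hx' : x - c • w ∈ U ⊔ Finsupp.supported K K {n : ℤ | M ≤ n ∧ n ≤ A} := by
        apply ih
        · intro n hn
          rw [Finsupp.sub_apply, Finsupp.smul_apply, h1 n hn, hw3 n hn, smul_zero, sub_zero]
        · intro n hn
          rw [Finsupp.sub_apply, Finsupp.smul_apply]
          rcases eq_or_lt_of_le (show n ≤ M - ((j : ℤ) + 1) by omega) with h | h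
          · rw [h]
            have harg : (M - ((j:ℤ)+1)) = M - ((j+1 : ℕ) : ℤ) := by push_cast; ring
            rw [harg, hc, smul_eq_mul, div_mul_cancel₀ _ hw1, sub_self]
          · rw [h2 n (by push_cast; omega), hw2 n (by push_cast; omega),
              smul_zero, sub_zero]
      have hxx : x = (x - c • w) + c • w := by abel
      rw [hxx]
      exact Submodule.add_mem _ hx' (Submodule.mem_sup_left (Submodule.smul_mem _ _ hwU))
  intro x hx
  rw [Finsupp.mem_supported'] at hx
  by_cases hxe : x.support.Nonempty
  · set B := x.support.min' hxe with hB
    have hBs : ∀ n, n < B → x n = 0 := by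
      intro n hn
      by_contra h
      exact absurd (x.support.min'_le n (Finsupp.mem_support_iff.mpr h)) (by omega)
    refine Q (M - B).toNat x (fun n hn => hx n (by simpa using (by omega))) ?_
    intro n hn
    have := Int.self_le_toNat (M - B)
    exact hBs n (by omega)
  · have hx0 : x = 0 := by
      ext n
      by_contra h
      exact hxe ⟨n, Finsupp.mem_support_iff.mpr h⟩
    rw [hx0]; exact Submodule.zero_mem _

lemma right_dichotomy (U : Submodule K (ℤ →₀ K))
    (h₁ : LinearlyInert (bernoulliShift K).toLinearMap U) :
    (∃ N : ℤ, U ≤ Finsupp.supported K K {n : ℤ | n ≤ N}) ∨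
    (∃ W : Submodule K (ℤ →₀ K), FiniteDimensional K W ∧
      Finsupp.supported K K {n : ℤ | 1 ≤ n} ≤ U ⊔ W) := by
  obtain ⟨W₀, hW₀fin, hW₀⟩ := exists_findim_sup h₁
  haveI := hW₀fin
  obtain ⟨A, hA1, hAW⟩ := findim_le_supported W₀
  have hU : ∀ u ∈ U, bernoulliShift K u ∈ U ⊔ W₀ := by
    intro u hu
    exact hW₀ (Submodule.mem_sup_right (Submodule.mem_map_of_mem hu))
  by_cases hb : ∀ u ∈ U, ∀ n : ℤ, A < n → u n = 0
  · left
    refine ⟨A, fun u hu => ?_⟩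
    rw [Finsupp.mem_supported']
    intro n hn
    simp only [Set.mem_setOf_eq, not_le] at hn
    exact hb u hu n hn
  · right
    push_neg at hb
    obtain ⟨u, hu, n₀, hn₀, hun₀⟩ := hb
    have hne : u.support.Nonempty := ⟨n₀, Finsupp.mem_support_iff.mpr hun₀⟩
    set m := u.support.max' hne with hm
    have hmA : A < m := lt_of_lt_of_le hn₀ (u.support.le_max' n₀ (Finsupp.mem_support_iff.mpr hun₀))
    have hum : u m ≠ 0 := Finsupp.mem_support_iff.mp (u.support.max'_mem hne)
    have hdeg : ∀ n, m < n → u n = 0 := by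
      intro n hn
      by_contra h
      exact absurd (u.support.le_max' n (Finsupp.mem_support_iff.mpr h)) (by omega)
    obtain ⟨M, hray⟩ := ray_right hAW hU hu hmA hum hdeg
    refine ⟨Finsupp.supported K K {n : ℤ | -A ≤ n ∧ n ≤ M}, findim_seg _ _, ?_⟩
    refine le_trans (Finsupp.supported_mono ?_) (elim_right hray)
    intro n hn
    simp only [Set.mem_setOf_eq] at hn ⊢
    omega

lemma left_dichotomy (U : Submodule K (ℤ →₀ K))
    (h₂ : LinearlyInert (bernoulliShift K).symm.toLinearMap U) :
    (∃ N : ℤ, U ≤ Finsupp.supported K K {n : ℤ | -N ≤ n}) ∨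
    (∃ W : Submodule K (ℤ →₀ K), FiniteDimensional K W ∧
      Finsupp.supported K K {n : ℤ | n ≤ 0} ≤ U ⊔ W) := by
  obtain ⟨W₀, hW₀fin, hW₀⟩ := exists_findim_sup h₂
  haveI := hW₀fin
  obtain ⟨A, hA1, hAW⟩ := findim_le_supported W₀
  have hU : ∀ u ∈ U, (bernoulliShift K).symm u ∈ U ⊔ W₀ := by
    intro u hu
    exact hW₀ (Submodule.mem_sup_right (Submodule.mem_map_of_mem hu))
  by_cases hb : ∀ u ∈ U, ∀ n : ℤ, n < -A → u n = 0
  · left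
    refine ⟨A, fun u hu => ?_⟩
    rw [Finsupp.mem_supported']
    intro n hn
    simp only [Set.mem_setOf_eq, not_le] at hn
    exact hb u hu n (by omega)
  · right
    push_neg at hb
    obtain ⟨u, hu, n₀, hn₀, hun₀⟩ := hb
    have hne : u.support.Nonempty := ⟨n₀, Finsupp.mem_support_iff.mpr hun₀⟩
    set m := u.support.min' hne with hm
    have hmA : m < -A :=
      lt_of_le_of_lt (u.support.min'_le n₀ (Finsupp.mem_support_iff.mpr hun₀)) hn₀
    have hum : u m ≠ 0 := Finsupp.mem_support_iff.mp (u.support.min'_mem hne)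
    have hlow : ∀ n, n < m → u n = 0 := by
      intro n hn
      by_contra h
      exact absurd (u.support.min'_le n (Finsupp.mem_support_iff.mpr h)) (by omega)
    obtain ⟨M, hray⟩ := ray_left hAW hU hu hmA hum hlow
    refine ⟨Finsupp.supported K K {n : ℤ | M ≤ n ∧ n ≤ A}, findim_seg _ _, ?_⟩
    refine le_trans (Finsupp.supported_mono ?_) (elim_left hray)
    intro n hn
    simp only [Set.mem_setOf_eq] at hn ⊢
    omega

lemma almostEqual_of {Vv : Type*} [AddCommGroup Vv] [Module K Vv]
    {U X W₁ W₂ : Submodule K Vv}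
    (hW₁ : FiniteDimensional K W₁) (hW₂ : FiniteDimensional K W₂)
    (h1 : U ≤ X ⊔ W₁) (h2 : X ≤ U ⊔ W₂) : AlmostEqual U X := by
  constructor
  · have := finquot_of_le_sup hW₁ h1
    rwa [inf_comm X U] at this
  · exact finquot_of_le_sup hW₂ h2

lemma supported_split {s t t' : Set ℤ} (h : s ⊆ t ∪ t') :
    Finsupp.supported K K s ≤ Finsupp.supported K K t ⊔ Finsupp.supported K K t' := by
  refine le_trans (Finsupp.supported_mono h) ?_
  rw [Finsupp.supported_union]

end BernoulliInertProof

open BernoulliInertProof in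
/-- If a subspace `U` of `V = ⊕_{n∈ℤ} K` is linearly `β`-inert and linearly `β⁻¹`-inert for
the two-sided Bernoulli shift `β`, then `U` is almost equal to one of `0`, `V⁻ = ⊕_{n≤0} K`,
`V⁺ = ⊕_{n≥0} K`, or `V`. -/
theorem bernoulli_inert_subspaces (K : Type*) [Field K] (U : Submodule K (ℤ →₀ K))
    (h₁ : LinearlyInert (bernoulliShift K).toLinearMap U)
    (h₂ : LinearlyInert (bernoulliShift K).symm.toLinearMap U) :
    AlmostEqual U ⊥ ∨
      AlmostEqual U (Finsupp.supported K K {n : ℤ | n ≤ 0}) ∨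
      AlmostEqual U (Finsupp.supported K K {n : ℤ | 0 ≤ n}) ∨
      AlmostEqual U ⊤ := by
  rcases right_dichotomy U h₁ with ⟨Np, hNp⟩ | ⟨Wp, hWp, hlep⟩ <;>
    rcases left_dichotomy U h₂ with ⟨Nm, hNm⟩ | ⟨Wm, hWm, hlem⟩
  · -- both bounded: U finite-dimensional
    left
    have hUle : U ≤ Finsupp.supported K K {n : ℤ | -Nm ≤ n ∧ n ≤ Np} := by
      intro u hu
      rw [Finsupp.mem_supported']
      intro n hn
      simp only [Set.mem_setOf_eq, not_and, not_le] at hn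
      by_cases hna : -Nm ≤ n
      · exact (Finsupp.mem_supported' K u).mp (hNp hu) n
          (by simp only [Set.mem_setOf_eq, not_le]; exact hn hna)
      · exact (Finsupp.mem_supported' K u).mp (hNm hu) n
          (by simp only [Set.mem_setOf_eq, not_le]; omega)
    haveI : FiniteDimensional K (Finsupp.supported K K {n : ℤ | -Nm ≤ n ∧ n ≤ Np}) :=
      findim_seg _ _
    haveI hUfin : FiniteDimensional K U := Submodule.finiteDimensional_of_le hUle
    exact almostEqual_of hUfin hUfin le_sup_right bot_le
  · -- U bounded above, co-large on the left: U ≈ V⁻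
    right; left
    refine almostEqual_of (findim_seg 1 Np) hWm ?_ hlem
    refine le_trans hNp (supported_split ?_)
    intro n hn
    simp only [Set.mem_setOf_eq, Set.mem_union] at hn ⊢
    omega
  · -- U bounded below, co-large on the right: U ≈ V⁺
    right; right; left
    have h1 : U ≤ Finsupp.supported K K {n : ℤ | 0 ≤ n} ⊔
        Finsupp.supported K K {n : ℤ | -Nm ≤ n ∧ n ≤ -1} := by
      refine le_trans hNm (supported_split ?_)
      intro n hn
      simp only [Set.mem_setOf_eq, Set.mem_union] at hn ⊢
      omega
    haveI := hWp
    haveI : FiniteDimensional K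
        (Wp ⊔ Finsupp.supported K K {n : ℤ | 0 ≤ n ∧ n ≤ 0} : Submodule K (ℤ →₀ K)) := by
      haveI : FiniteDimensional K (Finsupp.supported K K {n : ℤ | 0 ≤ n ∧ n ≤ 0}) :=
        findim_seg 0 0
      infer_instance
    have h2 : Finsupp.supported K K {n : ℤ | 0 ≤ n} ≤
        U ⊔ (Wp ⊔ Finsupp.supported K K {n : ℤ | 0 ≤ n ∧ n ≤ 0}) := by
      refine le_trans (supported_split (t := {n : ℤ | 1 ≤ n})
        (t' := {n : ℤ | 0 ≤ n ∧ n ≤ 0}) ?_) ?_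
      · intro n hn
        simp only [Set.mem_setOf_eq, Set.mem_union] at hn ⊢
        omega
      · refine sup_le (le_trans hlep (sup_le_sup_left le_sup_left U)) ?_
        exact le_trans le_sup_right (le_sup_right (a := U))
    exact almostEqual_of (findim_seg (-Nm) (-1)) ‹_› h1 h2
  · -- co-large on both sides: U ≈ ⊤
    right; right; right
    haveI := hWm; haveI := hWp
    haveI : FiniteDimensional K (Wm ⊔ Wp : Submodule K (ℤ →₀ K)) := inferInstance
    have h1 : U ≤ (⊤ : Submodule K (ℤ →₀ K)) ⊔ Wm := le_trans le_top le_sup_left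
    have h2 : (⊤ : Submodule K (ℤ →₀ K)) ≤ U ⊔ (Wm ⊔ Wp) := by
      rw [← (Finsupp.supported_univ (M := K) (R := K) (α := ℤ))]
      refine le_trans (supported_split (t := {n : ℤ | n ≤ 0}) (t' := {n : ℤ | 1 ≤ n}) ?_) ?_
      · intro n _
        simp only [Set.mem_setOf_eq, Set.mem_union]
        omega
      · refine sup_le (le_trans hlem (sup_le_sup_left le_sup_left U)) ?_
        exact le_trans hlep (sup_le_sup_left le_sup_right U)
    exact almostEqual_of hWm ‹_› h1 h2
end

section
/- In the lamplighter group G = 𝔽_p ≀ ℤ with base group B = ⊕_{n∈ℤ} 𝔽_p, if H is a subgroup of G containing an element of infinite order and an element of finite order other than the identity, and H is inert in G, then H has finite index in G. -/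
/-- The base group of the lamplighter group: `⊕_{n∈ℤ} 𝔽_p`, written multiplicatively. -/
abbrev LampBase (p : ℕ) := Multiplicative (ℤ →₀ ZMod p)

/-- The shift automorphism of the base group, moving each coordinate up by one. -/
noncomputable def lampShift (p : ℕ) : MulAut (LampBase p) :=
  AddEquiv.toMultiplicative (Finsupp.domCongr (Equiv.addRight (1 : ℤ)))

/-- The lamplighter group `𝔽_p ≀ ℤ = (⊕_{n∈ℤ} 𝔽_p) ⋊ ℤ`. -/
abbrev Lamplighter (p : ℕ) :=
  LampBase p ⋊[zpowersHom (MulAut (LampBase p)) (lampShift p)] Multiplicative ℤ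

/-- The base subgroup `B = ⊕_{n∈ℤ} 𝔽_p` of the lamplighter group. -/
noncomputable def lampB (p : ℕ) : Subgroup (Lamplighter p) := SemidirectProduct.inl.range

/-- The subgroup `B⁺ = ⊕_{n≥0} 𝔽_p` of the lamplighter group. -/
noncomputable def lampBplus (p : ℕ) : Subgroup (Lamplighter p) :=
  (Subgroup.toAddSubgroup'.symm
    ((Finsupp.supported (ZMod p) (ZMod p) {n : ℤ | 0 ≤ n}).toAddSubgroup)).map
    SemidirectProduct.inl

/-- The subgroup `B⁻ = ⊕_{n≤0} 𝔽_p` of the lamplighter group. -/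
noncomputable def lampBminus (p : ℕ) : Subgroup (Lamplighter p) :=
  (Subgroup.toAddSubgroup'.symm
    ((Finsupp.supported (ZMod p) (ZMod p) {n : ℤ | n ≤ 0}).toAddSubgroup)).map
    SemidirectProduct.inl

namespace LampProof


open Finsupp Multiplicative SemidirectProduct

noncomputable def sh (p : ℕ) (j : ℤ) : (ℤ →₀ ZMod p) ≃+ (ℤ →₀ ZMod p) :=
  Finsupp.domCongr (Equiv.addRight j)

lemma sh_apply {p : ℕ} (j : ℤ) (f : ℤ →₀ ZMod p) (i : ℤ) : sh p j f i = f (i - j) := by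
  simp [sh, Finsupp.domCongr_apply, Finsupp.equivMapDomain_apply, sub_eq_add_neg]

noncomputable def psi (p : ℕ) (j : ℤ) : MulAut (LampBase p) :=
  AddEquiv.toMultiplicative (sh p j)

lemma psi_ofAdd {p : ℕ} (j : ℤ) (f : ℤ →₀ ZMod p) : psi p j (ofAdd f) = ofAdd (sh p j f) := rfl

lemma psi_apply_eq {p : ℕ} (j : ℤ) (x : LampBase p) : psi p j x = ofAdd (sh p j (toAdd x)) := rfl

lemma sh_sh {p : ℕ} (a b : ℤ) (f : ℤ →₀ ZMod p) : sh p a (sh p b f) = sh p (a + b) f := by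
  ext i
  rw [sh_apply, sh_apply, sh_apply]
  congr 1
  ring

lemma sh_zero {p : ℕ} (f : ℤ →₀ ZMod p) : sh p 0 f = f := by
  ext i; rw [sh_apply]; congr 1; ring

lemma psi_psi {p : ℕ} (a b : ℤ) (x : LampBase p) : psi p a (psi p b x) = psi p (a + b) x := by
  rw [psi_apply_eq, psi_apply_eq, psi_apply_eq, toAdd_ofAdd, sh_sh]

lemma psi_zero_apply {p : ℕ} (x : LampBase p) : psi p 0 x = x := by
  rw [psi_apply_eq, sh_zero, ofAdd_toAdd]

lemma psi_one {p : ℕ} : psi p 1 = lampShift p := rfl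

noncomputable def theta (p : ℕ) : Multiplicative ℤ →* MulAut (LampBase p) where
  toFun z := psi p (toAdd z)
  map_one' := MulEquiv.ext fun x => psi_zero_apply x
  map_mul' a b := by
    refine MulEquiv.ext fun x => ?_
    show psi p (toAdd a + toAdd b) x = psi p (toAdd a) (psi p (toAdd b) x)
    rw [psi_psi]

lemma zpowersHom_eq_theta (p : ℕ) :
    zpowersHom (MulAut (LampBase p)) (lampShift p) = theta p := by
  apply MonoidHom.ext_mint
  rw [zpowersHom_apply, toAdd_ofAdd, zpow_one]
  show lampShift p = psi p 1
  rfl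

lemma phi_apply (p : ℕ) (z : Multiplicative ℤ) (b : LampBase p) :
    zpowersHom (MulAut (LampBase p)) (lampShift p) z b = psi p (toAdd z) b := by
  rw [zpowersHom_eq_theta]; rfl

lemma conj_inl (p : ℕ) (g : Lamplighter p) (b : LampBase p) :
    g * inl b * g⁻¹ = inl (psi p (toAdd (rightHom g)) b) := by
  conv_lhs => rw [← inl_left_mul_inr_right g]
  have h1 : (inr g.right : Lamplighter p) * inl b * (inr g.right)⁻¹
      = inl (psi p (toAdd g.right) b) := by
    rw [← phi_apply, SemidirectProduct.inl_aut, map_inv]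
  have hr : rightHom g = g.right := rfl
  rw [hr]
  calc inl g.left * inr g.right * inl b * (inl g.left * inr g.right)⁻¹
      = inl g.left * (inr g.right * inl b * (inr g.right)⁻¹) * (inl g.left)⁻¹ := by
        group
    _ = inl g.left * inl (psi p (toAdd g.right) b) * (inl g.left)⁻¹ := by rw [h1]
    _ = inl (g.left * psi p (toAdd g.right) b * g.left⁻¹) := by
        rw [← map_inv, ← map_mul, ← map_mul]
    _ = inl (psi p (toAdd g.right) b) := by rw [mul_comm g.left, mul_assoc, mul_inv_cancel, mul_one]

lemma phi_eq (p : ℕ) (z : Multiplicative ℤ) :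
    zpowersHom (MulAut (LampBase p)) (lampShift p) z = psi p (toAdd z) := by
  rw [zpowersHom_eq_theta]; rfl

lemma inr_mul_inl (p : ℕ) (z : Multiplicative ℤ) (x : LampBase p) :
    (inr z : Lamplighter p) * inl ((psi p (toAdd z)).symm x) = inl x * inr z := by
  have h := SemidirectProduct.inl_aut (φ := zpowersHom (MulAut (LampBase p)) (lampShift p))
    z ((psi p (toAdd z)).symm x)
  rw [phi_eq] at h
  rw [show (psi p (toAdd z)) ((psi p (toAdd z)).symm x) = x from
    (psi p (toAdd z)).apply_symm_apply x] at h
  rw [h, mul_assoc, mul_assoc, ← map_mul, inv_mul_cancel, map_one, mul_one]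

lemma decomp (p : ℕ) (g : Lamplighter p) :
    ∃ b : LampBase p, g = inr (rightHom g) * inl b := by
  refine ⟨(psi p (toAdd g.right)).symm g.left, ?_⟩
  have hr : rightHom g = g.right := rfl
  rw [hr, inr_mul_inl, inl_left_mul_inr_right]

lemma comm_comap {G G' : Type*} [Group G] [Group G'] (f : G' →* G) {X Y : Subgroup G}
    (h : Subgroup.Commensurable X Y) : Subgroup.Commensurable (X.comap f) (Y.comap f) := by
  have key : ∀ X Y : Subgroup G, X.relIndex Y ≠ 0 → (X.comap f).relIndex (Y.comap f) ≠ 0 := by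
    intro X Y hXY h0
    rw [Subgroup.relIndex_comap, Subgroup.map_comap_eq] at h0
    exact hXY (Subgroup.relIndex_eq_zero_of_le_right inf_le_right h0)
  exact ⟨key X Y h.1, key Y X h.2⟩

lemma comap_conj (p : ℕ) (H : Subgroup (Lamplighter p)) (z : Multiplicative ℤ) :
    (H.map (MulAut.conj ((inr z : Lamplighter p))).toMonoidHom).comap
      (inl : LampBase p →* Lamplighter p)
      = (H.comap (inl : LampBase p →* Lamplighter p)).map (psi p (toAdd z)).toMonoidHom := by
  ext b
  rw [Subgroup.mem_comap, Subgroup.mem_map_equiv, Subgroup.mem_map_equiv, Subgroup.mem_comap]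
  have : (MulAut.conj ((inr z : Lamplighter p))).symm (inl b)
      = inl ((psi p (toAdd z)).symm b) := by
    rw [MulAut.conj_symm_apply, ← map_inv]
    have h := SemidirectProduct.inl_aut_inv (φ := zpowersHom (MulAut (LampBase p)) (lampShift p))
      z b
    rw [← h]
    congr 1
    rw [phi_eq]
    rfl
  rw [this]

noncomputable def chainS (p : ℕ) (A : Subgroup (LampBase p)) : ℕ → Subgroup (LampBase p)
  | 0 => A
  | n+1 => chainS p A n ⊔ A.map (psi p ((n : ℤ)+1)).toMonoidHom

variable {p : ℕ} (A : Subgroup (LampBase p))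

lemma chainS_zero : chainS p A 0 = A := rfl

lemma chainS_succ (n : ℕ) :
    chainS p A (n+1) = chainS p A n ⊔ A.map (psi p ((n : ℤ)+1)).toMonoidHom := rfl

lemma chainS_le_succ (n : ℕ) : chainS p A n ≤ chainS p A (n+1) := by
  rw [chainS_succ]; exact le_sup_left

lemma map_psi_map_psi (a b : ℤ) :
    (A.map (psi p a).toMonoidHom).map (psi p b).toMonoidHom
      = A.map (psi p (b + a)).toMonoidHom := by
  rw [Subgroup.map_map]
  congr 1
  refine MonoidHom.ext fun x => ?_
  exact psi_psi b a x

lemma map_psi_zero : A.map (psi p 0).toMonoidHom = A := by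
  ext x
  rw [Subgroup.mem_map_equiv]
  have h : (psi p (0:ℤ)).symm x = x := by
    have h2 := psi_zero_apply ((psi p (0:ℤ)).symm x)
    rw [(psi p (0:ℤ)).apply_symm_apply] at h2
    exact h2.symm
  rw [h]

lemma le_chainS : ∀ n, A ≤ chainS p A n := by
  intro n
  induction n with
  | zero => exact le_rfl
  | succ n ih => exact le_trans ih (chainS_le_succ A n)

lemma Aj_le_chainS : ∀ n, ∀ j : ℕ, j ≤ n → A.map (psi p (j:ℤ)).toMonoidHom ≤ chainS p A n := by
  intro n
  induction n with
  | zero =>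
    intro j hj
    interval_cases j
    rw [Nat.cast_zero, map_psi_zero]
    exact le_rfl
  | succ n ih =>
    intro j hj
    rcases Nat.lt_or_ge j (n+1) with hlt | hge
    · exact le_trans (ih j (by omega)) le_sup_left
    · have : j = n + 1 := by omega
      subst this
      have hc : ((n+1:ℕ):ℤ) = (n:ℤ)+1 := by push_cast; ring
      rw [hc, chainS_succ]
      exact le_sup_right

lemma relindex_chainS
    (hcomm : ∀ j : ℤ, Subgroup.Commensurable A (A.map (psi p j).toMonoidHom)) :
    ∀ n, A.relIndex (chainS p A n) ≠ 0 := by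
  intro n
  induction n with
  | zero => rw [chainS_zero, Subgroup.relIndex_self]; exact one_ne_zero
  | succ n ih =>
    rw [← Subgroup.relIndex_mul_relIndex A (chainS p A n) (chainS p A (n+1))
      (le_chainS A n) (chainS_le_succ A n)]
    apply mul_ne_zero ih
    rw [chainS_succ, Subgroup.relIndex_sup_left]
    intro h0
    have hd := Subgroup.relIndex_dvd_of_le_left
      (A.map (psi p ((n:ℤ)+1)).toMonoidHom) (le_chainS A n)
    rw [h0] at hd
    exact (hcomm ((n:ℤ)+1)).1 (zero_dvd_iff.mp hd)

lemma map_one_chainS : ∀ n, (chainS p A n).map (psi p 1).toMonoidHom ≤ chainS p A (n+1) := by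
  intro n
  induction n with
  | zero =>
    rw [chainS_zero, chainS_succ, chainS_zero]
    have hc : ((0:ℕ):ℤ)+1 = (1:ℤ) := by norm_num
    rw [hc]
    exact le_sup_right
  | succ n ih =>
    rw [chainS_succ, Subgroup.map_sup, map_psi_map_psi]
    have h2 : (1 + ((n:ℤ)+1)) = ((n+1:ℕ):ℤ)+1 := by push_cast; ring
    rw [h2, chainS_succ]
    exact sup_le (le_trans ih le_sup_left) le_sup_right

lemma map_neg_one_chainS (N : ℕ) (hwrap : A.map (psi p ((N:ℤ)+1)).toMonoidHom = A) :
    ∀ n, n ≤ N → (chainS p A n).map (psi p (-1)).toMonoidHom ≤ chainS p A N := by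
  intro n
  induction n with
  | zero =>
    intro _
    show A.map (psi p (-1)).toMonoidHom ≤ chainS p A N
    conv_lhs => rw [← hwrap]
    rw [map_psi_map_psi]
    have : (-1 + ((N:ℤ)+1)) = ((N:ℕ):ℤ) := by push_cast; ring
    rw [this]
    exact Aj_le_chainS A N N le_rfl
  | succ n ih =>
    intro hle
    rw [chainS_succ, Subgroup.map_sup, map_psi_map_psi]
    have h2 : (-1 + ((n:ℤ)+1)) = ((n:ℕ):ℤ) := by push_cast; ring
    rw [h2]
    exact sup_le (ih (by omega)) (Aj_le_chainS A N n (by omega))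

lemma chainS_invariant (N : ℕ) (hwrap : A.map (psi p ((N:ℤ)+1)).toMonoidHom = A) :
    ∀ (j : ℤ) (x : LampBase p), x ∈ chainS p A N → psi p j x ∈ chainS p A N := by
  have hup : (chainS p A N).map (psi p 1).toMonoidHom ≤ chainS p A N := by
    refine le_trans (map_one_chainS A N) ?_
    rw [chainS_succ, hwrap]
    exact sup_le le_rfl (le_chainS A N)
  have hdown := map_neg_one_chainS A N hwrap N le_rfl
  intro j
  induction j using Int.induction_on with
  | zero => intro x hx; rw [psi_zero_apply]; exact hx
  | succ k ih =>
    intro x hx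
    have : psi p ((k:ℤ)+1) x = psi p 1 (psi p (k:ℤ) x) := by rw [psi_psi, add_comm]
    rw [this]
    exact hup (Subgroup.mem_map_of_mem _ (ih x hx))
  | pred k ih =>
    intro x hx
    have : psi p (-(k:ℤ)-1) x = psi p (-1) (psi p (-(k:ℤ)) x) := by
      rw [psi_psi]
      congr 1
      ring
    rw [this]
    exact hdown (Subgroup.mem_map_of_mem _ (ih x hx))

lemma multZ_torsionfree (z : Multiplicative ℤ) (hz : IsOfFinOrder z) : z = 1 := by
  obtain ⟨n, hn, hpow⟩ := isOfFinOrder_iff_pow_eq_one.mp hz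
  have h2 : (n:ℤ) * toAdd z = 0 := by
    have h3 := congrArg toAdd hpow
    rw [toAdd_pow] at h3
    simpa [nsmul_eq_mul] using h3
  have h4 : toAdd z = 0 := by
    rcases mul_eq_zero.mp h2 with h | h
    · exfalso
      have : (n:ℤ) ≠ 0 := by exact_mod_cast hn.ne'
      exact this h
    · exact h
  rw [← ofAdd_toAdd z, h4, ofAdd_zero]

lemma base_pow_p {p : ℕ} [NeZero p] (b : LampBase p) : b ^ p = 1 := by
  have h : (p:ℕ) • (toAdd b) = 0 := by
    rw [← Nat.cast_smul_eq_nsmul (ZMod p), ZMod.natCast_self, zero_smul]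
  calc b ^ p = ofAdd (p • toAdd b) := by rw [ofAdd_nsmul, ofAdd_toAdd]
  _ = 1 := by rw [h, ofAdd_zero]


lemma zsmul_mem {p : ℕ} [Fact p.Prime] (I : Subgroup (LampBase p)) (a : ZMod p)
    (f : ℤ →₀ ZMod p) (hf : ofAdd f ∈ I) : ofAdd (a • f) ∈ I := by
  haveI : NeZero p := ⟨(Fact.out : p.Prime).ne_zero⟩
  have h : a • f = a.val • f := by
    rw [← Nat.cast_smul_eq_nsmul (ZMod p), ZMod.natCast_val, ZMod.cast_id]
  rw [h, ofAdd_nsmul]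
  exact pow_mem hf _

lemma core {p : ℕ} [Fact p.Prime] (I : Subgroup (LampBase p))
    (c : ℤ →₀ ZMod p) (hc0 : c ≠ 0) (hcI : ofAdd c ∈ I)
    (hsh : ∀ (j : ℤ) (f : ℤ →₀ ZMod p), ofAdd f ∈ I → ofAdd (sh p j f) ∈ I) :
    I.index ≠ 0 := by
  classical
  haveI : NeZero p := ⟨(Fact.out : p.Prime).ne_zero⟩
  have hsupp : c.support.Nonempty := Finsupp.support_nonempty_iff.mpr hc0
  set l := c.support.min' hsupp with hl
  set d := c.support.max' hsupp with hd
  have hld : l ≤ d := c.support.min'_le _ (c.support.max'_mem hsupp)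
  have hcl : c l ≠ 0 := Finsupp.mem_support_iff.mp (c.support.min'_mem hsupp)
  have hcd : c d ≠ 0 := Finsupp.mem_support_iff.mp (c.support.max'_mem hsupp)
  have cz : ∀ x : ℤ, (x < l ∨ d < x) → c x = 0 := by
    intro x hx
    by_contra hne
    have hm := Finsupp.mem_support_iff.mpr hne
    have h1 := c.support.min'_le x hm
    have h2 := c.support.le_max' x hm
    omega
  have main : ∀ k : ℕ, ∀ f : ℤ →₀ ZMod p, (∀ i ∈ f.support, l - k ≤ i ∧ i ≤ d - 1 + k) →
      ∃ w : ℤ →₀ ZMod p, (∀ i ∈ w.support, l ≤ i ∧ i ≤ d - 1) ∧ ofAdd (f - w) ∈ I := by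
    intro k
    induction k with
    | zero =>
      intro f hf
      refine ⟨f, by simpa using hf, by simpa using one_mem I⟩
    | succ k ih =>
      intro f hf
      have fz : ∀ x : ℤ, (x < l - (k+1) ∨ d + k < x) → f x = 0 := by
        intro x hx
        by_contra hne
        have := hf x (Finsupp.mem_support_iff.mpr hne)
        push_cast at this
        omega
      set g₁ := ((c d)⁻¹ * f (d + k)) • sh p k c with hg₁
      set g₂ := ((c l)⁻¹ * f (l - (k+1))) • sh p (-(k+1) : ℤ) c with hg₂
      have hg₁I : ofAdd g₁ ∈ I := zsmul_mem _ _ _ (hsh k c hcI)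
      have hg₂I : ofAdd g₂ ∈ I := zsmul_mem _ _ _ (hsh _ c hcI)
      have g₁app : ∀ i, g₁ i = ((c d)⁻¹ * f (d + k)) * c (i - k) := by
        intro i; rw [hg₁, Finsupp.smul_apply, sh_apply, smul_eq_mul]
      have g₂app : ∀ i, g₂ i = ((c l)⁻¹ * f (l - (k+1))) * c (i + (k+1)) := by
        intro i; rw [hg₂, Finsupp.smul_apply, sh_apply, smul_eq_mul]; ring_nf
      set f' := f - g₁ - g₂ with hf'def
      have hf' : ∀ i ∈ f'.support, l - k ≤ i ∧ i ≤ d - 1 + k := by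
        intro i hi
        have hfi : f' i ≠ 0 := Finsupp.mem_support_iff.mp hi
        have hval : f' i = f i - ((c d)⁻¹ * f (d + k)) * c (i - k)
            - ((c l)⁻¹ * f (l - (k+1))) * c (i + (k+1)) := by
          rw [hf'def, Finsupp.sub_apply, Finsupp.sub_apply, g₁app, g₂app]
        constructor
        · by_contra hlt
          push_neg at hlt
          have h1 : c (i - k) = 0 := cz _ (by omega)
          rcases eq_or_lt_of_le (show i ≤ l - (k+1) by omega) with heq | hlt2
          · apply hfi
            rw [hval, h1, heq, sub_add_cancel]
            linear_combination (-(f (l - (↑k + 1)))) * inv_mul_cancel₀ hcl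
          · apply hfi
            rw [hval, h1, fz i (by omega), cz (i + (k+1)) (by omega)]
            ring
        · by_contra hgt
          push_neg at hgt
          have h2 : c (i + (k+1)) = 0 := cz _ (by omega)
          rcases eq_or_lt_of_le (show d + k ≤ i by omega) with heq | hlt2
          · apply hfi
            rw [hval, h2, ← heq, add_sub_cancel_right]
            linear_combination (-(f (d + ↑k))) * inv_mul_cancel₀ hcd
          · apply hfi
            rw [hval, h2, fz i (by omega), cz (i - k) (by omega)]
            ring
      obtain ⟨w, hw, hwI⟩ := ih f' hf'
      refine ⟨w, hw, ?_⟩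
      have heq : f - w = (f' - w) + g₁ + g₂ := by rw [hf'def]; abel
      rw [heq, ofAdd_add, ofAdd_add]
      exact mul_mem (mul_mem hwI hg₁I) hg₂I
  have reduce : ∀ f : ℤ →₀ ZMod p,
      ∃ w : ℤ →₀ ZMod p, (∀ i ∈ w.support, l ≤ i ∧ i ≤ d - 1) ∧ ofAdd (f - w) ∈ I := by
    intro f
    set k := f.support.sup (fun i => (l - i).toNat ⊔ (i - (d-1)).toNat) with hk
    refine main k f ?_
    intro i hi
    have hle := Finset.le_sup (f := fun i => (l - i).toNat ⊔ (i - (d-1)).toNat) hi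
    rw [← hk] at hle
    simp only [sup_le_iff] at hle
    omega
  set T := Finset.Icc l (d - 1) with hT
  set F : ({x // x ∈ T} → ZMod p) → (LampBase p ⧸ I) :=
    fun a => QuotientGroup.mk (ofAdd (∑ n : {x // x ∈ T}, Finsupp.single (n : ℤ) (a n))) with hF
  have hsurj : Function.Surjective F := by
    intro x
    induction x using QuotientGroup.induction_on with
    | H g =>
      obtain ⟨w, hw, hI⟩ := reduce (toAdd g)
      refine ⟨fun n => w (n : ℤ), ?_⟩
      have hsub : w.support ⊆ T := by
        intro i hi
        have := hw i hi
        simp only [hT, Finset.mem_Icc]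
        omega
      have hsum : (∑ n : {x // x ∈ T}, Finsupp.single (n : ℤ) (w (n : ℤ))) = w := by
        rw [Finset.sum_coe_sort T (fun n => Finsupp.single n (w n))]
        have hz : ∀ x ∈ T, x ∉ w.support → Finsupp.single x (w x) = 0 := by
          intro x _ hx
          rw [Finsupp.notMem_support_iff.mp hx, Finsupp.single_zero]
        exact (Finset.sum_subset hsub hz).symm.trans (Finsupp.sum_single w)
      show QuotientGroup.mk (ofAdd (∑ n : {x // x ∈ T}, Finsupp.single (n : ℤ) (w (n : ℤ)))) = _
      rw [hsum, QuotientGroup.eq]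
      have heq2 : (ofAdd w)⁻¹ * g = ofAdd (toAdd g - w) := by
        rw [← ofAdd_toAdd g, ← ofAdd_neg, ← ofAdd_add]
        simp only [toAdd_ofAdd]
        congr 1
        abel
      rw [heq2]
      exact hI
  have hfin : Finite (LampBase p ⧸ I) := Finite.of_surjective F hsurj
  exact Subgroup.index_ne_zero_of_finite


end LampProof

/-- A subgroup is inert (commensurated) if it is commensurable with all its conjugates. -/
def IsInert {G : Type*} [Group G] (H : Subgroup G) : Prop :=
  ∀ g : G, Subgroup.Commensurable H (H.map (MulAut.conj g).toMonoidHom)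

open LampProof Multiplicative SemidirectProduct

/-- If an inert subgroup of the lamplighter group contains an element of infinite order and a
nontrivial element of finite order, then it has finite index. -/
theorem lamplighter_inert_mixed_finite_index (p : ℕ) [Fact p.Prime]
    (H : Subgroup (Lamplighter p))
    (h₁ : ∃ h ∈ H, ¬ IsOfFinOrder h)
    (h₂ : ∃ h ∈ H, h ≠ 1 ∧ IsOfFinOrder h)
    (hH : IsInert H) : H.index ≠ 0 := by
  classical
  haveI : NeZero p := ⟨(Fact.out : p.Prime).ne_zero⟩
  obtain ⟨hh, hhH, hinf⟩ := h₁
  obtain ⟨ct, hctH, hct1, hctfin⟩ := h₂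
  set m := toAdd (rightHom hh) with hmdef
  have hm0 : m ≠ 0 := by
    intro h0
    apply hinf
    have h1 : rightHom hh = 1 := by
      rw [← ofAdd_toAdd (rightHom hh), ← hmdef, h0, ofAdd_zero]
    have h2 : hh ∈ (inl : LampBase p →* Lamplighter p).range := by
      rw [SemidirectProduct.range_inl_eq_ker_rightHom]; exact h1
    obtain ⟨b, rfl⟩ := h2
    exact isOfFinOrder_iff_pow_eq_one.mpr
      ⟨p, (Fact.out : p.Prime).pos, by rw [← map_pow, base_pow_p, map_one]⟩
  have hctB : ct ∈ (inl : LampBase p →* Lamplighter p).range := by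
    rw [SemidirectProduct.range_inl_eq_ker_rightHom]
    exact multZ_torsionfree _ (rightHom.isOfFinOrder hctfin)
  obtain ⟨b₀, rfl⟩ := hctB
  set A := H.comap (inl : LampBase p →* Lamplighter p) with hAdef
  have hb₀A : b₀ ∈ A := hctH
  have hb₀1 : b₀ ≠ 1 := fun h => hct1 (by rw [h, map_one])
  have hconj : ∀ g ∈ H, ∀ b : LampBase p, b ∈ A → psi p (toAdd (rightHom g)) b ∈ A := by
    intro g hg b hb
    have hmem : g * inl b * g⁻¹ ∈ H := mul_mem (mul_mem hg hb) (inv_mem hg)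
    rw [conj_inl] at hmem
    exact hmem
  have hAm : ∀ b ∈ A, psi p m b ∈ A := fun b hb => hconj hh hhH b hb
  have hAmneg : ∀ b ∈ A, psi p (-m) b ∈ A := by
    intro b hb
    have h5 := hconj hh⁻¹ (inv_mem hhH) b hb
    rwa [map_inv, toAdd_inv, ← hmdef] at h5
  have hAq : ∀ q : ℤ, ∀ b ∈ A, psi p (q * m) b ∈ A := by
    intro q
    induction q using Int.induction_on with
    | zero => intro b hb; rw [zero_mul, psi_zero_apply]; exact hb
    | succ k ih =>
      intro b hb
      have heq : psi p (((k:ℤ)+1) * m) b = psi p m (psi p ((k:ℤ)*m) b) := by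
        rw [psi_psi]; congr 1; ring
      rw [heq]; exact hAm _ (ih b hb)
    | pred k ih =>
      intro b hb
      have heq : psi p ((-(k:ℤ)-1) * m) b = psi p (-m) (psi p (-(k:ℤ)*m) b) := by
        rw [psi_psi]; congr 1; ring
      rw [heq]; exact hAmneg _ (ih b hb)
  set m' : ℕ := m.natAbs with hm'def
  have hm'pos : 0 < m' := Int.natAbs_pos.mpr hm0
  have habs := Int.natAbs_eq m
  have hwrapmem : ∀ b ∈ A, psi p (m':ℤ) b ∈ A := by
    intro b hb
    rcases habs with h | h
    · have h6 := hAq 1 b hb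
      rw [one_mul] at h6
      rwa [show ((m':ℕ):ℤ) = m from by omega]
    · have h6 := hAq (-1) b hb
      rw [neg_one_mul] at h6
      rwa [show ((m':ℕ):ℤ) = -m from by omega]
  have hwrapmemneg : ∀ b ∈ A, psi p (-(m':ℤ)) b ∈ A := by
    intro b hb
    rcases habs with h | h
    · have h6 := hAq (-1) b hb
      rw [neg_one_mul] at h6
      rwa [show (-(m':ℤ)) = -m from by omega]
    · have h6 := hAq 1 b hb
      rw [one_mul] at h6
      rwa [show (-(m':ℤ)) = m from by omega]
  set N := m' - 1 with hNdef
  have hwrap : A.map (psi p ((N:ℤ)+1)).toMonoidHom = A := by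
    have hc : ((N:ℕ):ℤ)+1 = (m':ℤ) := by omega
    rw [hc]
    apply le_antisymm
    · rintro x ⟨b, hb, rfl⟩
      exact hwrapmem b hb
    · intro b hb
      refine ⟨psi p (-(m':ℤ)) b, hwrapmemneg b hb, ?_⟩
      show psi p (m':ℤ) (psi p (-(m':ℤ)) b) = b
      rw [psi_psi, show ((m':ℤ) + -(m':ℤ)) = 0 from by ring, psi_zero_apply]
  have hcomm : ∀ j : ℤ, Subgroup.Commensurable A (A.map (psi p j).toMonoidHom) := by
    intro j
    have h1 := hH (inr (ofAdd j))
    have h2 := comm_comap (inl : LampBase p →* Lamplighter p) h1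
    rw [comap_conj, toAdd_ofAdd] at h2
    exact h2
  set Ifull := chainS p A N with hIfull
  have hAle := le_chainS A N
  have hrel : A.relIndex Ifull ≠ 0 := relindex_chainS A hcomm N
  have hInv := chainS_invariant A N hwrap
  have hIidx : Ifull.index ≠ 0 := by
    refine core Ifull (toAdd b₀) ?_ ?_ ?_
    · intro h0
      exact hb₀1 (by rw [← ofAdd_toAdd b₀, h0, ofAdd_zero])
    · show ofAdd (toAdd b₀) ∈ Ifull
      rw [ofAdd_toAdd]; exact hAle hb₀A
    · intro j f hf
      have h7 := hInv j (ofAdd f) hf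
      rwa [psi_ofAdd] at h7
  have hAidx : A.index ≠ 0 := by
    rw [← Subgroup.relIndex_mul_index hAle]
    exact mul_ne_zero hrel hIidx
  have hQfin : Finite (LampBase p ⧸ A) := Nat.finite_of_card_ne_zero hAidx
  haveI : NeZero m' := ⟨hm'pos.ne'⟩
  obtain ⟨h₀, hh₀H, hh₀r⟩ : ∃ h₀ ∈ H, rightHom h₀ = ofAdd ((m':ℕ):ℤ) := by
    rcases habs with h | h
    · refine ⟨hh, hhH, ?_⟩
      rw [show ((m':ℕ):ℤ) = m from by omega, hmdef, ofAdd_toAdd]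
    · refine ⟨hh⁻¹, inv_mem hhH, ?_⟩
      rw [map_inv, show ((m':ℕ):ℤ) = -m from by omega, hmdef, ← toAdd_inv, ofAdd_toAdd]
  set F2 : (LampBase p ⧸ A) × ZMod m' → (Lamplighter p ⧸ H) :=
    fun qr => QuotientGroup.mk (inr (ofAdd ((qr.2.val : ℤ))) * inl qr.1.out) with hF2
  have hsurj : Function.Surjective F2 := by
    intro x
    induction x using QuotientGroup.induction_on with
    | H g =>
      set n := toAdd (rightHom g) with hn
      set q := n / (m':ℤ) with hq
      set r := n % (m':ℤ) with hr
      have hm'z : ((m':ℕ):ℤ) ≠ 0 := by exact_mod_cast hm'pos.ne'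
      have hr0 : 0 ≤ r := Int.emod_nonneg n hm'z
      have hrlt : r < (m':ℤ) := Int.emod_lt_of_pos n (by exact_mod_cast hm'pos)
      have hg2H : (QuotientGroup.mk (g * h₀ ^ (-q)) : Lamplighter p ⧸ H) = QuotientGroup.mk g :=
        QuotientGroup.mk_mul_of_mem g (zpow_mem hh₀H _)
      set g₂ := g * h₀ ^ (-q) with hg₂
      have hdm := Int.mul_ediv_add_emod n (m':ℤ)
      have hg₂r : rightHom g₂ = ofAdd r := by
        rw [hg₂, map_mul, map_zpow, hh₀r, ← ofAdd_toAdd (rightHom g), ← hn, ← ofAdd_zsmul,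
          ← ofAdd_add]
        congr 1
        rw [smul_eq_mul]
        rw [← hq] at hdm
        rw [← hr] at hdm
        linarith
      obtain ⟨b, hb⟩ := decomp p g₂
      refine ⟨(QuotientGroup.mk b, ((r.toNat : ℕ) : ZMod m')), ?_⟩
      have hval : (((((r.toNat : ℕ)) : ZMod m')).val : ℤ) = r := by
        rw [ZMod.val_natCast_of_lt (by omega)]
        omega
      show (QuotientGroup.mk (inr (ofAdd ((((r.toNat : ℕ) : ZMod m')).val : ℤ))
        * inl (QuotientGroup.mk b : LampBase p ⧸ A).out) : Lamplighter p ⧸ H) = _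
      rw [hval]
      have houtb : (QuotientGroup.mk (inr (ofAdd r)
          * inl (QuotientGroup.mk b : LampBase p ⧸ A).out) : Lamplighter p ⧸ H)
          = QuotientGroup.mk (inr (ofAdd r) * inl b) := by
        rw [QuotientGroup.eq]
        have hmemA : (QuotientGroup.mk b : LampBase p ⧸ A).out⁻¹ * b ∈ A := by
          rw [← QuotientGroup.eq, QuotientGroup.out_eq']
        have hcalc : ((inr (ofAdd r) * inl (QuotientGroup.mk b : LampBase p ⧸ A).out)⁻¹
            * (inr (ofAdd r) * inl b) : Lamplighter p)
            = inl ((QuotientGroup.mk b : LampBase p ⧸ A).out⁻¹ * b) := by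
          rw [map_mul, map_inv]
          group
        rw [hcalc]
        exact hmemA
      rw [houtb, ← hg₂r, ← hb, hg₂, hg2H]
  have hfin : Finite (Lamplighter p ⧸ H) := Finite.of_surjective F2 hsurj
  exact Subgroup.index_ne_zero_of_finite
end

section
/- In the lamplighter group G = 𝔽_p ≀ ℤ, no infinite cyclic subgroup is inert. Concretely, if h ∈ G has infinite order, then ⟨h⟩ is not a commensurated (inert) subgroup of G. -/
open SemidirectProduct Subgroup

lemma lampBase_pow (p : ℕ) (b : LampBase p) : b ^ p = 1 := by
  have : Multiplicative.toAdd (b ^ p) = 0 := by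
    rw [toAdd_pow]; ext i; simp [ZMod.natCast_self]
  simpa using congrArg Multiplicative.ofAdd this

lemma lampShift_single (p : ℕ) (a : ℤ) (v : ZMod p) :
    lampShift p (Multiplicative.ofAdd (Finsupp.single a v)) =
      Multiplicative.ofAdd (Finsupp.single (a + 1) v) := by
  show Multiplicative.ofAdd ((Finsupp.domCongr (Equiv.addRight (1 : ℤ)))
      (Finsupp.single a v)) = _
  rw [Finsupp.domCongr_apply, Finsupp.equivMapDomain_single]
  rfl

lemma lampShift_zpow_single (p : ℕ) (m a : ℤ) (v : ZMod p) :
    ((lampShift p) ^ m) (Multiplicative.ofAdd (Finsupp.single a v)) =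
      Multiplicative.ofAdd (Finsupp.single (a + m) v) := by
  induction m using Int.induction_on generalizing a with
  | zero => simp
  | succ n ih =>
      rw [show ((n : ℤ) + 1) = 1 + n by ring, zpow_add, zpow_one, MulAut.mul_apply, ih,
        lampShift_single, show a + (n : ℤ) + 1 = a + (1 + n) by ring]
  | pred n ih =>
      have hinv : ∀ b : ℤ, ((lampShift p)⁻¹) (Multiplicative.ofAdd (Finsupp.single b v)) =
          Multiplicative.ofAdd (Finsupp.single (b - 1) v) := by
        intro b
        apply (lampShift p).injective
        rw [MulAut.apply_inv_self, lampShift_single, sub_add_cancel]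
      rw [show (-(n : ℤ) - 1) = -1 + -n by ring, zpow_add, zpow_neg_one, MulAut.mul_apply, ih,
        hinv, show a + -(n:ℤ) - 1 = a + (-1 + -n) by ring]

lemma conj_inl (p : ℕ) (x : Lamplighter p) (c : LampBase p) :
    x * SemidirectProduct.inl c * x⁻¹ =
      SemidirectProduct.inl (((lampShift p) ^ (Multiplicative.toAdd x.right)) c) := by
  conv_lhs => rw [← inl_left_mul_inr_right x]
  have h1 : (inr x.right : Lamplighter p) * inl c * (inr x.right)⁻¹ =
      inl ((zpowersHom (MulAut (LampBase p)) (lampShift p)) x.right c) := by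
    rw [← map_inv, ← inl_aut]
  calc inl x.left * inr x.right * inl c * (inl x.left * inr x.right)⁻¹
      = inl x.left * (inr x.right * inl c * (inr x.right)⁻¹) * (inl x.left)⁻¹ := by
        group
    _ = inl x.left * inl ((zpowersHom (MulAut (LampBase p)) (lampShift p)) x.right c)
          * (inl x.left)⁻¹ := by rw [h1]
    _ = inl (x.left * (zpowersHom (MulAut (LampBase p)) (lampShift p)) x.right c * x.left⁻¹) := by
        rw [map_mul, map_mul, map_inv]
    _ = _ := by rw [mul_comm x.left, mul_assoc, mul_inv_cancel, mul_one, zpowersHom_apply]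


/-- No infinite cyclic subgroup of the lamplighter group is inert (commensurated). -/
theorem lamplighter_infinite_cyclic_not_inert (p : ℕ) [Fact p.Prime]
    (h : Lamplighter p) (hh : ¬ IsOfFinOrder h) :
    ¬ IsInert (Subgroup.zpowers h) := by
  intro hin
  have hp : p.Prime := Fact.out
  set k : ℤ := Multiplicative.toAdd h.right with hk
  have hk0 : k ≠ 0 := by
    intro h0
    apply hh
    have hr1 : h.right = 1 := by
      simpa [hk] using congrArg Multiplicative.ofAdd h0
    have hx : h = SemidirectProduct.inl h.left := by
      conv_lhs => rw [← SemidirectProduct.inl_left_mul_inr_right h]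
      rw [hr1, map_one, mul_one]
    refine isOfFinOrder_iff_pow_eq_one.mpr ⟨p, hp.pos, ?_⟩
    rw [hx, ← map_pow, lampBase_pow, map_one]
  set c0 : LampBase p := Multiplicative.ofAdd (Finsupp.single (0 : ℤ) 1) with hc0
  set g : Lamplighter p := SemidirectProduct.inl c0 with hgdef
  obtain ⟨-, hrel⟩ := hin g
  apply hrel
  have hrz : ∀ n : ℤ, Multiplicative.toAdd (h ^ n).right = n * k := by
    intro n
    have h1 : (h ^ n).right = h.right ^ n := map_zpow rightHom h n
    rw [h1, toAdd_zpow, smul_eq_mul, hk]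
  have hbot : ((Subgroup.zpowers h).map (MulAut.conj g).toMonoidHom).subgroupOf
      (Subgroup.zpowers h) = ⊥ := by
    rw [eq_bot_iff]
    rintro ⟨x, hxH⟩ hx
    obtain ⟨n, hn⟩ := Subgroup.mem_zpowers_iff.mp hxH
    rw [Subgroup.mem_subgroupOf] at hx
    obtain ⟨y, hy, hxy⟩ := hx
    obtain ⟨m, hm⟩ := Subgroup.mem_zpowers_iff.mp hy
    rw [← hm] at hxy
    have hxy2 : g * h ^ m * g⁻¹ = x := by simpa using hxy
    have hxy' : g * h ^ m * g⁻¹ = h ^ n := by rw [hxy2, ← hn]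
    -- compare right components: m = n
    have hmn : m = n := by
      have := congrArg (Multiplicative.toAdd ∘ SemidirectProduct.rightHom) hxy'
      simp only [Function.comp_apply, map_mul, map_inv] at this
      rw [hgdef, rightHom_inl] at this
      have h2 : Multiplicative.toAdd ((1 : Multiplicative ℤ) * rightHom (h ^ m) * 1⁻¹) =
          m * k := by
        rw [one_mul, inv_one, mul_one]; exact hrz m
      rw [h2] at this
      have h3 : Multiplicative.toAdd (rightHom (h ^ n)) = n * k := hrz n
      rw [h3] at this
      exact mul_right_cancel₀ hk0 this
    -- so g commutes with h ^ n
    have hcomm : h ^ n * g * (h ^ n)⁻¹ = g := by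
      rw [hmn] at hxy'
      have : g * h ^ n = h ^ n * g := by
        have := congrArg (· * g) hxy'
        simpa [mul_assoc] using this
      rw [← this]; group
    have hn0 : n = 0 := by
      rw [hgdef, hc0, conj_inl, hrz n, lampShift_zpow_single, zero_add] at hcomm
      have := SemidirectProduct.inl_injective hcomm
      have h4 : Finsupp.single (n * k) (1 : ZMod p) = Finsupp.single 0 1 :=
        Multiplicative.ofAdd.injective this
      have h5 : n * k = 0 := (Finsupp.single_left_inj one_ne_zero).mp h4
      rcases mul_eq_zero.mp h5 with h6 | h6
      · exact h6
      · exact absurd h6 hk0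
    show (⟨x, hxH⟩ : Subgroup.zpowers h) ∈ ⊥
    rw [Subgroup.mem_bot]
    apply Subtype.ext
    show x = 1
    rw [← hn, hn0, zpow_zero]
  show (((Subgroup.zpowers h).map (MulAut.conj g).toMonoidHom).subgroupOf
      (Subgroup.zpowers h)).index = 0
  rw [hbot, Subgroup.index_bot, Nat.card_zpowers]
  exact orderOf_eq_zero hh
end

section
/- Let K be a field and A a K-subspace of B = K[x, x⁻¹] with Ax, Ax⁻¹ ⊆ A + F for some finite-dimensional F. Let n₊ (resp. n₋) be the max (resp. min) exponent appearing in supports of nonzero elements of F. If every element of A has lower degree > n₋ and some element has upper degree ≥ n₊, then A is almost equal to K[x] (i.e., A/(A ∩ K[x]) and K[x]/(A ∩ K[x]) are finite-dimensional). -/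
open LaurentPolynomial

namespace AEPolyAux

variable {K : Type*} [Field K]

lemma coeff_add (f g : K[T;T⁻¹]) (n : ℤ) : (f + g).coeff n = f.coeff n + g.coeff n := rfl

lemma coeff_sub (f g : K[T;T⁻¹]) (n : ℤ) : (f - g).coeff n = f.coeff n - g.coeff n := rfl

lemma coeff_smul (c : K) (f : K[T;T⁻¹]) (n : ℤ) : (c • f).coeff n = c * f.coeff n := rfl

lemma coeff_zero (n : ℤ) : (0 : K[T;T⁻¹]).coeff n = 0 := rfl

lemma coeff_mul_T (f : K[T;T⁻¹]) (n : ℤ) : (f * T 1 : K[T;T⁻¹]).coeff n = f.coeff (n - 1) := by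
  rw [show (T 1 : K[T;T⁻¹]) = AddMonoidAlgebra.single 1 1 from rfl]
  rw [AddMonoidAlgebra.coeff_mul_single_apply]
  simp [sub_eq_add_neg]

lemma single_eq_smul_T (c : K) (j : ℤ) : AddMonoidAlgebra.single j c = c • (T j : K[T;T⁻¹]) := by
  rw [show (T j : K[T;T⁻¹]) = AddMonoidAlgebra.single j 1 from rfl, AddMonoidAlgebra.smul_single, smul_eq_mul,
    mul_one]

lemma mem_span_T (f : K[T;T⁻¹]) (s : Set ℤ) (h : ∀ j ∈ f.coeff.support, j ∈ s) :
    f ∈ Submodule.span K ((fun j : ℤ => (T j : K[T;T⁻¹])) '' s) := by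
  have hf : f = f.coeff.support.sum (fun j => AddMonoidAlgebra.single j (f.coeff j)) :=
    (AddMonoidAlgebra.sum_coeff_single f).symm
  rw [hf]
  refine Submodule.sum_mem _ fun j hj => ?_
  rw [single_eq_smul_T]
  exact Submodule.smul_mem _ _ (Submodule.subset_span ⟨j, h j hj, rfl⟩)

/-- The submodule of Laurent polynomials with no exponents below 0. -/
def nonneg (K : Type*) [Field K] : Submodule K K[T;T⁻¹] where
  carrier := {f | ∀ j < 0, f.coeff j = 0}
  add_mem' := by
    intro f g hf hg j hj
    rw [coeff_add, hf j hj, hg j hj, add_zero]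
  zero_mem' := fun j _ => rfl
  smul_mem' := by
    intro c f hf j hj
    rw [coeff_smul, hf j hj, mul_zero]

/-- The submodule of Laurent polynomials with all exponents at most `e`. -/
def below (K : Type*) [Field K] (e : ℤ) : Submodule K K[T;T⁻¹] where
  carrier := {f | ∀ j, e < j → f.coeff j = 0}
  add_mem' := by
    intro f g hf hg j hj
    rw [coeff_add, hf j hj, hg j hj, add_zero]
  zero_mem' := fun j _ => rfl
  smul_mem' := by
    intro c f hf j hj
    rw [coeff_smul, hf j hj, mul_zero]

lemma mem_below {e : ℤ} {f : K[T;T⁻¹]} : f ∈ below K e ↔ ∀ j, e < j → f.coeff j = 0 := Iff.rfl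

lemma below_mono {e e' : ℤ} (h : e ≤ e') : below K e ≤ below K e' := by
  intro f hf j hj
  exact hf j (lt_of_le_of_lt h hj)

lemma mem_W_iff (f : K[T;T⁻¹]) :
    f ∈ Submodule.span K (Set.range fun n : ℕ => (T (n : ℤ) : K[T;T⁻¹])) ↔
      ∀ j < 0, f.coeff j = 0 := by
  constructor
  · intro hf
    have hle : Submodule.span K (Set.range fun n : ℕ => (T (n : ℤ) : K[T;T⁻¹])) ≤ nonneg K := by
      rw [Submodule.span_le]
      rintro - ⟨n, rfl⟩
      intro j hj
      rw [T_apply]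
      rw [if_neg]
      omega
    exact hle hf
  · intro hf
    have h1 : f ∈ Submodule.span K ((fun j : ℤ => (T j : K[T;T⁻¹])) '' {j : ℤ | 0 ≤ j}) := by
      refine mem_span_T f _ fun j hj => ?_
      by_contra h
      exact Finsupp.mem_support_iff.1 hj (hf j (by simpa using h))
    refine Submodule.span_le.2 ?_ h1
    rintro - ⟨j, hj, rfl⟩
    refine Submodule.subset_span ⟨j.toNat, ?_⟩
    simp only
    rw [Int.toNat_of_nonneg hj]

end AEPolyAux

open AEPolyAux

set_option maxHeartbeats 1000000 in
set_option synthInstance.maxHeartbeats 400000 in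
/-- Let `A ≤ B = K[x,x⁻¹]` with `Ax, Ax⁻¹ ⊆ A + F` for a finite-dimensional `F`, and let
`n₊` (resp. `n₋`) be the maximal (resp. minimal) exponent appearing in supports of nonzero
elements of `F`.  If every nonzero element of `A` has lower degree `> n₋` while some element
of `A` has upper degree `≥ n₊`, then `A` is almost equal to `K[x]`. -/
theorem almost_equal_polynomials_of_bounded_below (K : Type*) [Field K]
    (A F : Submodule K K[T;T⁻¹]) (hF : FiniteDimensional K F)
    (hAx : A.map (LinearMap.mulRight K (T 1)) ≤ A ⊔ F)
    (hAxinv : A.map (LinearMap.mulRight K (T (-1))) ≤ A ⊔ F)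
    (nplus nminus : ℤ)
    (hmax : ∀ f ∈ F, f ≠ 0 → f.coeff.support.max ≤ (nplus : WithBot ℤ))
    (hmax_att : ∃ f ∈ F, f ≠ 0 ∧ f.coeff.support.max = (nplus : WithBot ℤ))
    (hmin : ∀ f ∈ F, f ≠ 0 → (nminus : WithTop ℤ) ≤ f.coeff.support.min)
    (hmin_att : ∃ f ∈ F, f ≠ 0 ∧ f.coeff.support.min = (nminus : WithTop ℤ))
    (hlow : ∀ a ∈ A, a ≠ 0 → (nminus : WithTop ℤ) < a.coeff.support.min)
    (hup : ∃ a ∈ A, (nplus : WithBot ℤ) ≤ a.coeff.support.max) :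
    AlmostEqual A (Submodule.span K (Set.range fun n : ℕ => (T (n : ℤ) : K[T;T⁻¹]))) := by
  classical
  set W : Submodule K K[T;T⁻¹] :=
    Submodule.span K (Set.range fun n : ℕ => (T (n : ℤ) : K[T;T⁻¹])) with hWdef
  -- low coefficients of elements of A vanish
  have hlow' : ∀ a ∈ A, ∀ j ≤ nminus, a.coeff j = 0 := by
    intro a ha j hj
    by_contra h
    have hne : a ≠ 0 := by rintro rfl; exact h rfl
    have hjs : j ∈ a.coeff.support := Finsupp.mem_support_iff.2 h
    have h1 := hlow a ha hne
    have h2 : a.coeff.support.min ≤ (j : WithTop ℤ) := Finset.min_le hjs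
    have h3 : (nminus : WithTop ℤ) < (j : WithTop ℤ) := lt_of_lt_of_le h1 h2
    rw [WithTop.coe_lt_coe] at h3
    omega
  -- high coefficients of elements of F vanish
  have hmaxF : ∀ f ∈ F, ∀ j, nplus < j → f.coeff j = 0 := by
    intro f hf j hj
    by_cases hne : f = 0
    · subst hne; rfl
    by_contra h
    have hjs : j ∈ f.coeff.support := Finsupp.mem_support_iff.2 h
    have h2 : (j : WithBot ℤ) ≤ f.coeff.support.max := Finset.le_max hjs
    have h3 : (j : WithBot ℤ) ≤ (nplus : WithBot ℤ) := le_trans h2 (hmax f hf hne)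
    rw [WithBot.coe_le_coe] at h3
    omega
  -- the step lemma: push top degrees up by one
  have step : ∀ e : ℤ, nplus ≤ e → ∀ a ∈ A, a.coeff e ≠ 0 → (∀ j, e < j → a.coeff j = 0) →
      ∃ b ∈ A, b.coeff (e + 1) ≠ 0 ∧ ∀ j, e + 1 < j → b.coeff j = 0 := by
    intro e he a ha hae haj
    have hmem : (a * T 1 : K[T;T⁻¹]) ∈ A ⊔ F := by
      refine hAx ?_
      exact Submodule.mem_map.2 ⟨a, ha, rfl⟩
    obtain ⟨b, hb, f, hf, hbf⟩ := Submodule.mem_sup.1 hmem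
    have hco : ∀ j : ℤ, b.coeff j = (a * T 1 : K[T;T⁻¹]).coeff j - f.coeff j := by
      intro j
      have := congrArg (fun g : K[T;T⁻¹] => g.coeff j) hbf
      simp only [coeff_add] at this
      exact eq_sub_of_add_eq this
    refine ⟨b, hb, ?_, ?_⟩
    · rw [hco, coeff_mul_T, add_sub_cancel_right, hmaxF f hf _ (by omega), sub_zero]
      exact hae
    · intro j hj
      rw [hco, coeff_mul_T, haj _ (by omega), hmaxF f hf _ (by omega), sub_zero]
  -- extract a top degree `d ≥ nplus` from hup
  obtain ⟨a₀, ha₀A, ha₀⟩ := hup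
  have hsupp : a₀.coeff.support.Nonempty := by
    rcases Finset.eq_empty_or_nonempty a₀.coeff.support with h | h
    · rw [h, Finset.max_empty] at ha₀
      exact absurd ha₀ (by simp)
    · exact h
  set d : ℤ := a₀.coeff.support.max' hsupp with hddef
  have hdmax : a₀.coeff.support.max = (d : WithBot ℤ) := (Finset.coe_max' hsupp).symm
  have hnd : nplus ≤ d := by
    rw [hdmax, WithBot.coe_le_coe] at ha₀
    exact ha₀
  have ha₀d : a₀.coeff d ≠ 0 := Finsupp.mem_support_iff.1 (a₀.coeff.support.max'_mem hsupp)
  have ha₀top : ∀ j, d < j → a₀.coeff j = 0 := by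
    intro j hj
    by_contra h
    have := Finset.le_max' a₀.coeff.support j (Finsupp.mem_support_iff.2 h)
    omega
  -- iterate the step lemma
  have iter : ∀ k : ℕ, ∃ a ∈ A, a.coeff (d + k) ≠ 0 ∧ ∀ j, d + k < j → a.coeff j = 0 := by
    intro k
    induction k with
    | zero => exact ⟨a₀, ha₀A, by simpa using ha₀d, by simpa using ha₀top⟩
    | succ k ih =>
      obtain ⟨a, ha, h1, h2⟩ := ih
      obtain ⟨b, hbA, hb1, hb2⟩ := step (d + k) (by omega) a ha h1 h2
      refine ⟨b, hbA, ?_, ?_⟩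
      · have : (d : ℤ) + (k + 1 : ℕ) = d + k + 1 := by push_cast; ring
        rw [this]; exact hb1
      · intro j hj
        refine hb2 j ?_
        push_cast at hj
        omega
  have exists_top : ∀ e : ℤ, d ≤ e → ∃ a ∈ A, a.coeff e ≠ 0 ∧ ∀ j, e < j → a.coeff j = 0 := by
    intro e he
    obtain ⟨a, ha, h1, h2⟩ := iter (e - d).toNat
    have heq : d + ((e - d).toNat : ℤ) = e := by omega
    rw [heq] at h1 h2
    exact ⟨a, ha, h1, h2⟩
  -- the window of possibly-negative coefficients
  set S : Finset ℤ := Finset.Ico (nminus + 1) 0 with hSdef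
  let π : K[T;T⁻¹] →ₗ[K] (↥S → K) :=
    { toFun := fun f s => f.coeff (s : ℤ)
      map_add' := fun f g => funext fun s => coeff_add f g s
      map_smul' := fun c f => funext fun s => rfl }
  have hπ : ∀ (f : K[T;T⁻¹]) (s : ↥S), π f s = f.coeff (s : ℤ) := fun _ _ => rfl
  haveI : Module.Finite K (↥S → K) := Module.Finite.pi
  set V : ℤ → Submodule K (↥S → K) := fun e => Submodule.map π (A ⊓ below K e) with hVdef
  have hVmono : ∀ e e' : ℤ, e ≤ e' → V e ≤ V e' :=
    fun e e' h => Submodule.map_mono (inf_le_inf_left _ (below_mono h))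
  -- stabilization
  obtain ⟨e₀, he₀⟩ : ∃ e₀ : ℤ, ∀ e, e₀ ≤ e → V e = V e₀ := by
    set R : Set ℕ := {n | ∃ e : ℤ, n = Module.finrank K (V e)} with hRdef
    have hbdd : BddAbove R := by
      refine ⟨Module.finrank K (↥S → K), ?_⟩
      rintro n ⟨e, rfl⟩
      exact Submodule.finrank_le _
    have hne : R.Nonempty := ⟨_, 0, rfl⟩
    obtain ⟨e₀, he₀⟩ : ∃ e : ℤ, sSup R = Module.finrank K (V e) := Nat.sSup_mem hne hbdd
    refine ⟨e₀, fun e he => ?_⟩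
    refine (Submodule.eq_of_le_of_finrank_le (hVmono e₀ e he) ?_).symm
    rw [← he₀]
    exact le_csSup hbdd ⟨e, rfl⟩
  -- elements of A ∩ W with arbitrary large top degrees
  have topW : ∀ e : ℤ, e₀ < e → d ≤ e → ∃ c, c ∈ A ∧ (∀ j < 0, c.coeff j = 0) ∧ c.coeff e ≠ 0 ∧
      ∀ j, e < j → c.coeff j = 0 := by
    intro e he₀e hde
    obtain ⟨a, ha, h1, h2⟩ := exists_top e hde
    have haV : π a ∈ V e := ⟨a, ⟨ha, h2⟩, rfl⟩
    have hVe : V e ≤ V (e - 1) := by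
      rw [he₀ e (by omega)]
      exact hVmono _ _ (by omega)
    obtain ⟨a', ⟨ha'A, ha'b⟩, ha'π⟩ := hVe haV
    refine ⟨a - a', Submodule.sub_mem A ha ha'A, ?_, ?_, ?_⟩
    · intro j hj
      rw [coeff_sub]
      by_cases hjm : j ≤ nminus
      · rw [hlow' a ha j hjm, hlow' a' ha'A j hjm, sub_zero]
      · have hjS : j ∈ S := by rw [hSdef]; simp; omega
        have := congrArg (fun g : ↥S → K => g ⟨j, hjS⟩) ha'π
        simp only [hπ] at this
        rw [this, sub_self]
    · rw [coeff_sub, ha'b e (by omega), sub_zero]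
      exact h1
    · intro j hj
      rw [coeff_sub, h2 j hj, ha'b j (by omega), sub_zero]
  -- Part 1 : A / (A ∩ W) is finite dimensional
  have part1 : FiniteDimensional K (↥A ⧸ (A ⊓ W).comap A.subtype) := by
    set φ : ↥A →ₗ[K] (K[T;T⁻¹] ⧸ W) := W.mkQ.comp A.subtype with hφdef
    have hker : LinearMap.ker φ = (A ⊓ W).comap A.subtype := by
      ext x
      simp only [hφdef, LinearMap.mem_ker, LinearMap.comp_apply, Submodule.mkQ_apply,
        Submodule.coe_subtype, Submodule.mem_comap, Submodule.mem_inf,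
        Submodule.Quotient.mk_eq_zero]
      exact ⟨fun h => ⟨x.2, h⟩, fun h => h.2⟩
    set N₁ : Submodule K K[T;T⁻¹] :=
      Submodule.span K ((fun j : ℤ => (T j : K[T;T⁻¹])) '' ↑(Finset.Ico (nminus + 1) 0))
      with hN₁def
    have hN₁ : FiniteDimensional K N₁ :=
      FiniteDimensional.span_of_finite K ((Finset.finite_toSet _).image _)
    have hrange : LinearMap.range φ ≤ N₁.map W.mkQ := by
      rintro - ⟨a, rfl⟩
      set b : K[T;T⁻¹] :=
          AddMonoidAlgebra.ofCoeff (Finsupp.filter (fun j : ℤ => j < 0) ((a : K[T;T⁻¹]).coeff))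
          with hbdef
      have hbapp : ∀ j : ℤ, b.coeff j = if j < 0 then (↑a : K[T;T⁻¹]).coeff j else 0 :=
        fun j => Finsupp.filter_apply _ _ _
      have hb : b ∈ N₁ := by
        refine mem_span_T b _ fun j hj => ?_
        have hbj : b.coeff j ≠ 0 := Finsupp.mem_support_iff.1 hj
        rw [hbapp] at hbj
        by_cases hj0 : j < 0
        · rw [if_pos hj0] at hbj
          have : ¬ j ≤ nminus := fun h => hbj (hlow' (↑a) a.2 j h)
          simp only [Finset.coe_Ico, Set.mem_Ico]
          omega
        · rw [if_neg hj0] at hbj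
          exact absurd rfl hbj
      refine ⟨b, hb, ?_⟩
      have hW : b - (↑a : K[T;T⁻¹]) ∈ W := by
        rw [hWdef, mem_W_iff]
        intro j hj
        rw [coeff_sub, hbapp, if_pos hj, sub_self]
      simp only [hφdef, LinearMap.comp_apply, Submodule.mkQ_apply, Submodule.coe_subtype]
      rw [Submodule.Quotient.eq]
      exact hW
    haveI hmapfd : FiniteDimensional K (N₁.map W.mkQ) := Module.Finite.map N₁ W.mkQ
    haveI hrfd : FiniteDimensional K (LinearMap.range φ) :=
      Submodule.finiteDimensional_of_le hrange
    have e1 := φ.quotKerEquivRange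
    rw [hker] at e1
    exact Module.Finite.equiv e1.symm
  -- Part 2 : W / (A ∩ W) is finite dimensional
  have part2 : FiniteDimensional K (↥W ⧸ (A ⊓ W).comap W.subtype) := by
    set E : ℤ := max (max e₀ d) 0 with hEdef
    set N₀ : Submodule K K[T;T⁻¹] :=
      Submodule.span K ((fun j : ℤ => (T j : K[T;T⁻¹])) '' ↑(Finset.Icc 0 E)) with hN₀def
    haveI hN₀ : FiniteDimensional K N₀ :=
      FiniteDimensional.span_of_finite K ((Finset.finite_toSet _).image _)
    have key : ∀ n : ℕ, ∀ w ∈ W, (∀ j : ℤ, E + 1 + n ≤ j → w.coeff j = 0) →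
        w ∈ N₀ ⊔ (A ⊓ W) := by
      intro n
      induction n with
      | zero =>
        intro w hw hbound
        refine Submodule.mem_sup_left ?_
        refine mem_span_T w _ fun j hj => ?_
        have hwj : w.coeff j ≠ 0 := Finsupp.mem_support_iff.1 hj
        have h0 : 0 ≤ j := by
          by_contra h
          exact hwj ((mem_W_iff w).1 (by rw [hWdef] at hw; exact hw) j (by omega))
        have hE : j ≤ E := by
          by_contra h
          exact hwj (hbound j (by push_cast; omega))
        simp only [Finset.coe_Icc, Set.mem_Icc]
        exact ⟨h0, hE⟩
      | succ n ih =>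
        intro w hw hbound
        set e : ℤ := E + 1 + n with hedef
        by_cases hwe : w.coeff e = 0
        · refine ih w hw fun j hj => ?_
          rcases eq_or_lt_of_le hj with h | h
          · rw [← h]; exact hwe
          · exact hbound j (by push_cast; omega)
        · obtain ⟨c, hcA, hcneg, hce, hctop⟩ := topW e (by omega) (by omega)
          have hcW : c ∈ W := by rw [hWdef, mem_W_iff]; exact hcneg
          set w' : K[T;T⁻¹] := w - (w.coeff e / c.coeff e) • c with hw'def
          have hw'W : w' ∈ W := Submodule.sub_mem W hw (Submodule.smul_mem W _ hcW)
          have hw'bound : ∀ j : ℤ, E + 1 + n ≤ j → w'.coeff j = 0 := by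
            intro j hj
            rw [hw'def, coeff_sub, coeff_smul]
            rcases eq_or_lt_of_le hj with h | h
            · rw [← h] at *
              rw [div_mul_cancel₀ _ hce, sub_self]
            · rw [hbound j (by push_cast; omega), hctop j (by omega), mul_zero, sub_zero]
          have := ih w' hw'W hw'bound
          have hweq : w = w' + (w.coeff e / c.coeff e) • c := by rw [hw'def]; ring
          rw [hweq]
          exact Submodule.add_mem _ this
            (Submodule.mem_sup_right (Submodule.smul_mem _ _ ⟨hcA, hcW⟩))
    have hWle : W ≤ N₀ ⊔ (A ⊓ W) := by
      intro w hw
      rcases Finset.eq_empty_or_nonempty w.coeff.support with hs | hs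
      · have : w = 0 := by
          ext j
          by_contra h
          have : j ∈ w.coeff.support := Finsupp.mem_support_iff.2 h
          rw [hs] at this
          exact absurd this (Finset.notMem_empty j)
        rw [this]
        exact Submodule.zero_mem _
      · set M : ℤ := w.coeff.support.max' hs with hMdef
        refine key (M - E).toNat w hw fun j hj => ?_
        by_contra h
        have := Finset.le_max' w.coeff.support j (Finsupp.mem_support_iff.2 h)
        omega
    set U : Submodule K ↥W := (A ⊓ W).comap W.subtype with hUdef
    set X : Submodule K K[T;T⁻¹] := N₀ ⊓ W with hXdef
    haveI hXfd : FiniteDimensional K X :=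
      Submodule.finiteDimensional_of_le (inf_le_left : X ≤ N₀)
    set ψ : ↥X →ₗ[K] (↥W ⧸ U) := U.mkQ.comp (Submodule.inclusion (inf_le_right : X ≤ W))
      with hψdef
    have hsurj : Function.Surjective ψ := by
      intro z
      obtain ⟨w, rfl⟩ := Submodule.mkQ_surjective U z
      obtain ⟨x, hx, v, hv, hxv⟩ := Submodule.mem_sup.1 (hWle w.2)
      have hxW : x ∈ W := by
        have : x = ↑w - v := by rw [← hxv]; ring
        rw [this]
        exact Submodule.sub_mem W w.2 hv.2
      refine ⟨⟨x, hx, hxW⟩, ?_⟩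
      simp only [hψdef, LinearMap.comp_apply, Submodule.mkQ_apply]
      rw [Submodule.Quotient.eq]
      have : (Submodule.inclusion (inf_le_right : X ≤ W)) ⟨x, hx, hxW⟩ - w =
          (⟨x - ↑w, Submodule.sub_mem W hxW w.2⟩ : ↥W) := rfl
      rw [this, hUdef]
      simp only [Submodule.mem_comap, Submodule.coe_subtype]
      have : x - ↑w = -v := by rw [← hxv]; ring
      rw [this]
      exact Submodule.neg_mem _ hv
    exact Module.Finite.of_surjective ψ hsurj
  exact ⟨part1, part2⟩
end

section
/- Let φ : H → G be a group homomorphism with dense image into a topological group G, and let U be a compact open subgroup of G. Then φ⁻¹(U) is a commensurated (inert) subgroup of H, i.e., for every h ∈ H the subgroup φ⁻¹(U) ∩ (φ⁻¹(U))^h has finite index in both φ⁻¹(U) and (φ⁻¹(U))^h. -/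
/-- Two subgroups are commensurate if their intersection has finite index in both. -/
def Commensurate {G : Type*} [Group G] (H K : Subgroup G) : Prop :=
  ((H ⊓ K).subgroupOf H).index ≠ 0 ∧ ((H ⊓ K).subgroupOf K).index ≠ 0

/-- Key lemma: if `U` is compact open and `V` is open, then the preimage of `U ⊓ V` has
finite index in the preimage of `U`. -/
lemma key_index_ne_zero {H G : Type*} [Group H] [Group G]
    [TopologicalSpace G] [IsTopologicalGroup G] (φ : H →* G)
    (U V : Subgroup G) (hUc : IsCompact (U : Set G)) (hUo : IsOpen (U : Set G))
    (hVo : IsOpen (V : Set G)) :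
    (((U ⊓ V).comap φ).subgroupOf (U.comap φ)).index ≠ 0 := by
  haveI : CompactSpace U := isCompact_iff_compactSpace.mp hUc
  -- the subgroup U ⊓ V of U is open in U
  have hKo : IsOpen (((U ⊓ V).subgroupOf U : Subgroup U) : Set U) := by
    have : (((U ⊓ V).subgroupOf U : Subgroup U) : Set U)
        = Subtype.val ⁻¹' ((U : Set G) ∩ (V : Set G)) := by
      ext x
      simp [Subgroup.mem_subgroupOf, Subgroup.mem_inf, x.2]
    rw [this]
    exact (hUo.inter hVo).preimage continuous_subtype_val
  haveI : Finite (U ⧸ ((U ⊓ V).subgroupOf U)) :=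
    Subgroup.quotient_finite_of_isOpen _ hKo
  haveI hfi : ((U ⊓ V).subgroupOf U).FiniteIndex :=
    Subgroup.finiteIndex_of_finite_quotient (H := (U ⊓ V).subgroupOf U)
  -- restrict φ to a hom from the preimage of U to U
  let f : (U.comap φ) →* U :=
    (φ.comp (U.comap φ).subtype).codRestrict U (fun x => x.2)
  have hEq : ((U ⊓ V).comap φ).subgroupOf (U.comap φ)
      = ((U ⊓ V).subgroupOf U).comap f := by
    ext x
    have hx : φ (x : H) ∈ U := x.2
    simp [Subgroup.mem_subgroupOf, Subgroup.mem_comap, f, MonoidHom.codRestrict, hx]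
  rw [hEq, Subgroup.index_comap]
  exact (Subgroup.instFiniteIndex_subgroupOf _ _).index_ne_zero

/-- If `φ : H → G` is a homomorphism with dense image into a topological group `G` and `U` is
a compact open subgroup of `G`, then `φ⁻¹(U)` is a commensurated (inert) subgroup of `H`. -/
theorem preimage_compact_open_commensurated {H G : Type*} [Group H] [Group G]
    [TopologicalSpace G] [IsTopologicalGroup G] (φ : H →* G) (hφ : DenseRange φ)
    (U : Subgroup G) (hUc : IsCompact (U : Set G)) (hUo : IsOpen (U : Set G)) :
    ∀ h : H, Commensurate (U.comap φ)
      ((U.comap φ).map (MulAut.conj h).toMonoidHom) := by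
  intro h
  set g : G := φ h with hg
  set V : Subgroup G := U.map (MulAut.conj g).toMonoidHom with hV
  -- V as a set is the image of U under the conjugation homeomorphism
  have hVset : (V : Set G) =
      ((Homeomorph.mulLeft g).trans (Homeomorph.mulRight g⁻¹)) '' (U : Set G) := by
    ext x
    simp [hV, Subgroup.mem_map, MulAut.conj, mul_assoc]
  have hVc : IsCompact (V : Set G) := by
    rw [hVset]
    exact hUc.image (Homeomorph.continuous _)
  have hVo : IsOpen (V : Set G) := by
    rw [hVset]
    exact (Homeomorph.isOpen_image _).mpr hUo
  -- the conjugate of the preimage is the preimage of the conjugate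
  have hB : (U.comap φ).map (MulAut.conj h).toMonoidHom = V.comap φ := by
    ext x
    constructor
    · rintro ⟨y, hy, rfl⟩
      exact ⟨φ y, hy, by simp [MulAut.conj, hg]⟩
    · rintro ⟨u, hu, hux⟩
      refine ⟨h⁻¹ * x * h, ?_, by simp [MulAut.conj, mul_assoc]⟩
      have : φ (h⁻¹ * x * h) = u := by
        have : φ x = g * u * g⁻¹ := by
          rw [← hux]; simp [MulAut.conj, hg]
        simp [this, hg, mul_assoc]
      simpa [Subgroup.mem_comap, this] using hu
  rw [hB]
  have hinf : (U.comap φ) ⊓ (V.comap φ) = (U ⊓ V).comap φ := by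
    rw [Subgroup.comap_inf]
  constructor
  · rw [hinf]
    exact key_index_ne_zero φ U V hUc hUo hVo
  · rw [hinf, inf_comm U V]
    exact key_index_ne_zero φ V U hVc hVo hUo
end
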